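/- arXiv:1510.06233 — 16 statements merged into one kernel-verified Lean document; each statement's English description precedes it below -/
import Mathlib

section
/- Let R be a commutative ring and i : R → R a total operation such that (R, i) is an inversive meadow, i.e., i (i x) = x and x * (x * i x) = x hold for all x ∈ R. Then the following equations are derivable consequences: i 0 = 0, i 1 = 1, i (-x) = -(i x) for all x ∈ R, and i (x * y) = i x * i y for all x, y ∈ R. -/
private lemma uniq_pinv {R : Type*} [CommRing R] (x y z : R)
    (hy1 : x*x*y = x) (hy2 : y*y*x = y) (hz1 : x*x*z = x) (hz2 : z*z*x = z) : y = z := by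
  linear_combination (x*z-1)*hy2 - y^2*hz1 - (x*y-1)*hz2 + z^2*hy1

theorem inversive_meadow_derived_equations {R : Type*} [CommRing R] (i : R → R)
    (h1 : ∀ x : R, i (i x) = x) (h2 : ∀ x : R, x * (x * i x) = x) :
    i 0 = 0 ∧ i 1 = 1 ∧ (∀ x : R, i (-x) = -(i x)) ∧
      (∀ x y : R, i (x * y) = i x * i y) := by
  have hA : ∀ x : R, x*x*(i x) = x := fun x => by linear_combination h2 x
  have hB : ∀ x : R, (i x)*(i x)*x = i x := fun x => by
    have := hA (i x); rwa [h1 x] at this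
  refine ⟨?_, ?_, ?_, ?_⟩
  · have := hB 0; simpa using this.symm
  · have := hA 1; simpa using this
  · intro x
    exact uniq_pinv (-x) (i (-x)) (-(i x)) (hA _) (hB _)
      (by linear_combination -hA x) (by linear_combination -hB x)
  · intro x y
    exact uniq_pinv (x*y) (i (x*y)) (i x * i y) (hA _) (hB _)
      (by linear_combination (y*y*(i y))*(hA x) + x*(hA y))
      (by linear_combination (i y*i y*y)*(hB x) + (i x)*(hB y))
end

section
/- Let R be a commutative ring with 0 ≠ 1 and let i : R → R be a total operation. Then the following are equivalent: (a) (R, i) is an inversive meadow (i (i x) = x and x * (x * i x) = x for all x) satisfying the cancellation axiom (for all x, y, z: x ≠ 0 and x * y = x * z imply y = z); (b) (R, i) is a zero-totalized field, i.e., i 0 = 0 and x * i x = 1 for all x ≠ 0. In other words, the class of non-trivial inversive cancellation meadows coincides with the class of zero-totalized fields. -/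
theorem cancellation_meadow_iff_zero_totalized_field {R : Type*} [CommRing R]
    (hne : (0 : R) ≠ 1) (i : R → R) :
    ((∀ x : R, i (i x) = x) ∧ (∀ x : R, x * (x * i x) = x) ∧
        (∀ x y z : R, x ≠ 0 → x * y = x * z → y = z)) ↔
      (i 0 = 0 ∧ ∀ x : R, x ≠ 0 → x * i x = 1) := by
  constructor
  · rintro ⟨hii, hmul, hcanc⟩
    have hinv : ∀ x : R, x ≠ 0 → x * i x = 1 := by
      intro x hx
      have := hmul x
      have : x * (x * i x) = x * 1 := by rw [mul_one]; exact this
      exact hcanc x _ _ hx this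
    refine ⟨?_, hinv⟩
    by_contra h0
    have hi := hinv (i 0) h0
    rw [hii 0, mul_zero] at hi
    exact hne hi
  · rintro ⟨h0, hinv⟩
    have hcanc : ∀ x y z : R, x ≠ 0 → x * y = x * z → y = z := by
      intro x y z hx h
      have := congrArg (fun t => i x * t) h
      simp only [← mul_assoc, mul_comm (i x) x, hinv x hx, one_mul] at this
      exact this
    have hne0 : ∀ x : R, x ≠ 0 → i x ≠ 0 := by
      intro x hx hix
      have := hinv x hx
      rw [hix, mul_zero] at this
      exact hne this
    refine ⟨?_, ?_, hcanc⟩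
    · intro x
      by_cases hx : x = 0
      · rw [hx, h0, h0]
      · have hix := hne0 x hx
        apply hcanc (i x) _ _ hix
        rw [mul_comm (i x) x, hinv x hx, hinv (i x) hix]
    · intro x
      by_cases hx : x = 0
      · rw [hx, zero_mul]
      · rw [hinv x hx, mul_one]
end

section
/- Let (R, i) be an inversive meadow such that (n : R) * i (n : R) = 1 for every positive integer n. Then there exists a unique ring homomorphism φ : ℚ → R satisfying φ (x⁻¹) = i (φ x) for all x ∈ ℚ, where ⁻¹ is the zero-totalized inverse of ℚ (so 0⁻¹ = 0, as in Mathlib). This expresses that ℚ with zero-totalized inverse is the initial algebra among inversive meadows in which all positive numerals are invertible. -/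
theorem rat_initial_meadow {R : Type*} [CommRing R] (i : R → R)
    (h1 : ∀ x : R, i (i x) = x) (h2 : ∀ x : R, x * (x * i x) = x)
    (hn : ∀ n : ℕ, 0 < n → (n : R) * i (n : R) = 1) :
    ∃! φ : ℚ →+* R, ∀ x : ℚ, φ x⁻¹ = i (φ x) := by
  have i0 : i 0 = 0 := by
    have h := h2 (i 0)
    rw [h1] at h
    simpa using h.symm
  have key : ∀ a b : R, a * b = 1 → i a = b := by
    intro a b hab
    have h3 : a * i a = 1 := by linear_combination b * h2 a + (1 - a * i a) * hab
    linear_combination b * h3 - i a * hab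
  -- every nonzero integer maps to a unit in R
  have hu : ∀ y : nonZeroDivisors ℤ, IsUnit ((Int.castRingHom R) y) := by
    rintro ⟨y, hy⟩
    have hy0 : y ≠ 0 := nonZeroDivisors.coe_ne_zero ⟨y, hy⟩
    have hna : 0 < y.natAbs := Int.natAbs_pos.mpr hy0
    have h := hn y.natAbs hna
    simp only [Int.coe_castRingHom]
    obtain ⟨m, hm⟩ : ∃ m : ℕ, m = y.natAbs := ⟨y.natAbs, rfl⟩
    rw [← hm] at h
    rcases Int.natAbs_eq y with h' | h'
    all_goals rw [← hm] at h'
    · exact IsUnit.of_mul_eq_one _ (by rw [h', Int.cast_natCast]; exact h)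
    · refine IsUnit.of_mul_eq_one (-(i ((m : ℕ) : R))) ?_
      rw [h', Int.cast_neg, Int.cast_natCast, neg_mul_neg]
      exact h
  let φ : ℚ →+* R := IsLocalization.lift (M := nonZeroDivisors ℤ) (S := ℚ) hu
  have hφ : ∀ x : ℚ, φ x⁻¹ = i (φ x) := by
    intro x
    rcases eq_or_ne x 0 with rfl | hx
    · simp [i0]
    · have hmul : φ x * φ x⁻¹ = 1 := by
        rw [← map_mul, mul_inv_cancel₀ hx, map_one]
      exact (key _ _ hmul).symm
  refine ⟨φ, hφ, ?_⟩
  intro ψ hψ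
  have gen : ∀ (f : ℚ →+* R), (∀ x : ℚ, f x⁻¹ = i (f x)) →
      ∀ q : ℚ, f q = (q.num : R) * i ((q.den : ℕ) : R) := by
    intro f hf q
    conv_lhs => rw [← Rat.num_div_den q]
    rw [div_eq_mul_inv, map_mul, map_intCast, hf, map_natCast]
  exact RingHom.ext fun q => (gen ψ hψ q).trans (gen φ hφ q).symm
end

section
/- Let (R, i) be an inversive meadow such that (1 + x^2 + y^2) * i (1 + x^2 + y^2) = 1 for all x, y ∈ R. Then (n : R) * i (n : R) = 1 for every positive integer n. (This is the key fact making the axiom (1 + x² + y²)·(1 + x² + y²)⁻¹ = 1 an equivalent replacement for the infinite axiom family n·n⁻¹ = 1, n ≥ 1, in the initial-algebra specification of the rational numbers as a meadow.) -/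
theorem sum_of_squares_axiom_implies_numerals_invertible {R : Type*} [CommRing R]
    (i : R → R)
    (h1 : ∀ x : R, i (i x) = x) (h2 : ∀ x : R, x * (x * i x) = x)
    (h3 : ∀ x y : R, (1 + x ^ 2 + y ^ 2) * i (1 + x ^ 2 + y ^ 2) = 1) :
    ∀ n : ℕ, 0 < n → (n : R) * i (n : R) = 1 := by
  -- Step 1: any element of the form 1 + x² + y² is a unit.
  have hsq : ∀ x y : R, IsUnit (1 + x ^ 2 + y ^ 2) := fun x y =>
    isUnit_iff_exists_inv.mpr ⟨_, h3 x y⟩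
  -- Step 2: every prime p gives a unit (p : R).
  have hprime : ∀ p : ℕ, p.Prime → IsUnit ((p : ℤ) : R) := by
    intro p hp
    haveI : Fact p.Prime := ⟨hp⟩
    obtain ⟨a, b, hab⟩ := ZMod.sq_add_sq p (-1)
    -- p ∣ 1 + a² + b² in ℤ
    have hdvd : (p : ℤ) ∣ 1 + (a.val : ℤ) ^ 2 + (b.val : ℤ) ^ 2 := by
      have : ((1 + (a.val : ℤ) ^ 2 + (b.val : ℤ) ^ 2 : ℤ) : ZMod p) = 0 := by
        push_cast
        rw [ZMod.natCast_val, ZMod.natCast_val, ZMod.cast_id, ZMod.cast_id]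
        linear_combination hab
      exact (ZMod.intCast_zmod_eq_zero_iff_dvd _ _).mp this
    obtain ⟨m, hm⟩ := hdvd
    have hu : IsUnit ((1 + (a.val : ℤ) ^ 2 + (b.val : ℤ) ^ 2 : ℤ) : R) := by
      push_cast
      exact hsq _ _
    rw [hm] at hu
    push_cast at hu
    exact_mod_cast isUnit_of_mul_isUnit_left hu
  -- Step 3: every positive natural is a unit, by strong induction on prime factors.
  have hnat : ∀ n : ℕ, 0 < n → IsUnit ((n : ℕ) : R) := by
    intro n
    induction n using Nat.strong_induction_on with
    | _ n ih =>
      intro hn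
      rcases eq_or_lt_of_le (show 1 ≤ n by omega) with h1' | h1'
      · rw [← h1']; simp
      · have hpf := Nat.minFac_prime (by omega : n ≠ 1)
        have hdvd := Nat.minFac_dvd n
        obtain ⟨k, hk⟩ := hdvd
        have hk0 : 0 < k := by
          rcases Nat.eq_zero_or_pos k with h | h
          · subst h; rw [hk] at hn; simp at hn
          · exact h
        have hklt : k < n := by
          have h2le := hpf.two_le
          nlinarith
        have hu1 : IsUnit ((n.minFac : ℕ) : R) := by
          have := hprime n.minFac hpf
          push_cast at this ⊢
          exact this
        have hu2 : IsUnit ((k : ℕ) : R) := ih k hklt hk0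
        rw [hk]
        push_cast
        exact hu1.mul hu2
  -- Step 4: conclude using h2 and cancellation.
  intro n hn
  have hu := hnat n hn
  have h := h2 (n : R)
  have : (n : R) * ((n : R) * i (n : R)) = (n : R) * 1 := by rw [h, mul_one]
  exact hu.mul_left_cancel this
end

section
/- Let (R, i) be an inversive meadow and define d : R → R → R by d x y := x * i y. Then d satisfies the divisive meadow axioms: d 1 (d 1 x) = x, d (x * x) x = x, and d x y = x * d 1 y for all x, y ∈ R; moreover i x = d 1 x for all x ∈ R. (This is one half of the definitional equivalence between inversive and divisive meadows.) -/
theorem inversive_to_divisive {R : Type*} [CommRing R] (i : R → R)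
    (h1 : ∀ x : R, i (i x) = x) (h2 : ∀ x : R, x * (x * i x) = x) :
    let d : R → R → R := fun x y => x * i y
    (∀ x : R, d 1 (d 1 x) = x) ∧ (∀ x : R, d (x * x) x = x) ∧
      (∀ x y : R, d x y = x * d 1 y) ∧ (∀ x : R, i x = d 1 x) := by
  intro d
  refine ⟨fun x => by simp [d, h1], fun x => by
    have := h2 x; simp only [d]; linear_combination this, fun x y => by simp [d], fun x => by simp [d]⟩
end

section
/- Let (R, d) be a divisive meadow and define i : R → R by i x := d 1 x. Then i satisfies the inversive meadow axioms: i (i x) = x and x * (x * i x) = x for all x ∈ R; moreover d x y = x * i y for all x, y ∈ R. (This is the other half of the definitional equivalence between inversive and divisive meadows.) -/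
theorem divisive_to_inversive {R : Type*} [CommRing R] (d : R → R → R)
    (h1 : ∀ x : R, d 1 (d 1 x) = x) (h2 : ∀ x : R, d (x * x) x = x)
    (h3 : ∀ x y : R, d x y = x * d 1 y) :
    let i : R → R := fun x => d 1 x
    (∀ x : R, i (i x) = x) ∧ (∀ x : R, x * (x * i x) = x) ∧
      (∀ x y : R, d x y = x * i y) := by
  intro i
  refine ⟨fun x => h1 x, fun x => ?_, fun x y => h3 x y⟩
  have := h2 x
  rw [h3] at this
  calc x * (x * i x) = x * x * d 1 x := by ring
    _ = x := this
end

section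
/- Let (R, d) be a divisive meadow. Then the following equations hold for all x, y, z, w ∈ R: d 1 0 = 0, d 1 1 = 1, d 1 (-x) = -(d 1 x), d 1 (x * y) = d 1 x * d 1 y, (d x y) * (d z w) = d (x * z) (y * w), and d (d x y) (d z w) = d (x * w) (y * z). -/
private lemma dm_inv_unique {R : Type*} [CommRing R] (a b c : R)
    (hb : b = b * b * a) (hab : a = a * a * b)
    (hc : c = c * c * a) (hac : a = a * a * c) : b = c := by
  linear_combination hb - hc + (b^2 + b*c) * hac - (c^2 + b*c) * hab

theorem divisive_meadow_derived_equations {R : Type*} [CommRing R] (d : R → R → R)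
    (h1 : ∀ x : R, d 1 (d 1 x) = x) (h2 : ∀ x : R, d (x * x) x = x)
    (h3 : ∀ x y : R, d x y = x * d 1 y) :
    d 1 0 = 0 ∧ d 1 1 = 1 ∧ (∀ x : R, d 1 (-x) = -(d 1 x)) ∧
      (∀ x y : R, d 1 (x * y) = d 1 x * d 1 y) ∧
      (∀ x y z w : R, d x y * d z w = d (x * z) (y * w)) ∧
      (∀ x y z w : R, d (d x y) (d z w) = d (x * w) (y * z)) := by
  set i : R → R := fun x => d 1 x with hi
  -- x * x * i x = x
  have key : ∀ x : R, x * x * i x = x := by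
    intro x
    have := h2 x
    rw [h3 (x*x) x] at this
    simpa [hi] using this
  have hinv : ∀ x : R, i (i x) = x := fun x => h1 x
  -- i x * i x * x = i x
  have key' : ∀ x : R, i x * i x * x = i x := by
    intro x
    have := key (i x)
    rwa [hinv x] at this
  -- multiplicativity
  have hmul : ∀ x y : R, i (x * y) = i x * i y := by
    intro x y
    apply dm_inv_unique (x * y) (i (x*y)) (i x * i y)
    · have := key' (x*y); linear_combination -this
    · have := key (x*y); linear_combination -this
    · have hx := key' x; have hy := key' y; linear_combination
        -((i x * i x * x) * hy) - i y * hx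
    · have hx := key x; have hy := key y; linear_combination
        -((x * x * i x) * hy) - y * hx
  have h0 : i 0 = 0 := by have := key' 0; simpa using this.symm
  have h1' : i 1 = 1 := by have := key 1; simpa using this
  have hneg1 : i (-1) = -1 := by
    have := key (-1); simpa using this
  have hneg : ∀ x : R, i (-x) = - i x := by
    intro x
    have : i ((-1) * x) = i (-1) * i x := hmul (-1) x
    rw [hneg1] at this
    simpa using this
  refine ⟨h0, h1', hneg, hmul, ?_, ?_⟩
  · intro x y z w
    rw [h3 x y, h3 z w, h3 (x*z) (y*w)]
    have := hmul y w
    simp only [hi] at this ⊢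
    rw [this]; ring
  · intro x y z w
    rw [h3 x y, h3 z w]
    rw [h3 (x * d 1 y) (z * d 1 w), h3 (x*w) (y*z)]
    have e1 : i (z * i w) = i z * i (i w) := hmul z (i w)
    rw [hinv w] at e1
    have e2 := hmul y z
    simp only [hi] at e1 e2 ⊢
    rw [e1, e2]; ring
end

section
/- Let (R, d) be a divisive meadow and let a ∈ R be an element of the minimal divisive submeadow of R, i.e., a belongs to every subring S of R that is closed under d (meaning x, y ∈ S implies d x y ∈ S). Then there exists a finite list of pairs of integers (p₁, q₁), …, (p_r, q_r) such that a = ∑_{j=1}^{r} d ((p_j : R)) ((q_j : R)). (This is the semantic content of the normal form theorem: every closed term over the signature of divisive meadows is derivably equal to a basic term, i.e., a finite sum of signed fractions of numerals.) -/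
set_option linter.unusedSectionVars false
set_option maxHeartbeats 1000000

section Meadow
variable {R : Type*} [CommRing R] (d : R → R → R)

def MBasic : R → Prop := fun a =>
  ∃ L : List (ℤ × ℤ), a = (L.map (fun pq => ((pq.1 : R)) * d 1 ((pq.2 : R)))).sum

variable (h1 : ∀ x : R, d 1 (d 1 x) = x) (h2 : ∀ x : R, d (x * x) x = x)
  (h3 : ∀ x y : R, d x y = x * d 1 y)
include h1 h2 h3

lemma mA (x : R) : x * x * d 1 x = x := by have := h2 x; rwa [h3] at this

lemma mB (x : R) : d 1 x * d 1 x * x = d 1 x := by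
  have := mA d h1 h2 h3 (d 1 x); rwa [h1] at this

lemma muniq (m t t' : R) (ht : t * t * m = t) (hm : m * m * t = m)
    (ht' : t' * t' * m = t') (hm' : m * m * t' = m) : t = t' := by
  have e1 : t = t * m * t' := by
    calc t = t * t * m := ht.symm
      _ = t * t * (m * m * t') := by rw [hm']
      _ = (t * t * m) * (m * t') := by ring
      _ = t * (m * t') := by rw [ht]
      _ = t * m * t' := by ring
  have e2 : t' = t * m * t' := by
    calc t' = t' * t' * m := ht'.symm
      _ = t' * t' * (m * m * t) := by rw [hm]
      _ = (t' * t' * m) * (m * t) := by ring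
      _ = t' * (m * t) := by rw [ht']
      _ = t * m * t' := by ring
  exact e1.trans e2.symm

lemma miuniq (m t' : R) (ht' : t' * t' * m = t') (hm' : m * m * t' = m) :
    d 1 m = t' :=
  muniq d h1 h2 h3 m (d 1 m) t' (mB d h1 h2 h3 m) (mA d h1 h2 h3 m) ht' hm'

lemma mi1 : d 1 (1 : R) = 1 := by
  have := mA d h1 h2 h3 (1 : R); simpa using this

lemma mimul (x y : R) : d 1 (x * y) = d 1 x * d 1 y := by
  apply miuniq d h1 h2 h3
  · linear_combination (d 1 y * d 1 y * y) * mB d h1 h2 h3 x + (d 1 x) * mB d h1 h2 h3 y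
  · linear_combination (y * y * d 1 y) * mA d h1 h2 h3 x + x * mA d h1 h2 h3 y

lemma msplit (x ε : R) (hε : ε * ε = ε) :
    d 1 x = ε * d 1 (x * ε) + (1 - ε) * d 1 (x * (1 - ε)) := by
  apply miuniq d h1 h2 h3
  · linear_combination ε * mB d h1 h2 h3 (x * ε) + (1 - ε) * mB d h1 h2 h3 (x * (1 - ε))
      - 2 * (x * d 1 (x * ε) * d 1 (x * (1 - ε))) * hε
  · linear_combination mA d h1 h2 h3 (x * ε) + mA d h1 h2 h3 (x * (1 - ε))
      - (x ^ 2 * d 1 (x * ε) + x ^ 2 * d 1 (x * (1 - ε))) * hε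

lemma mibase (n m δ : R) (hδ : δ * δ = δ) (hM : m * d 1 m * δ = δ) :
    δ * d 1 (n * d 1 m * δ) = m * d 1 n * δ := by
  have key : d 1 (n * d 1 m * δ) = m * d 1 n * δ := by
    apply miuniq d h1 h2 h3
    · linear_combination (m^2 * d 1 m * δ^3) * mB d h1 h2 h3 n
        + (m^2 * d 1 n * d 1 m * (δ + 1)) * hδ + (m * d 1 n) * hM
    · linear_combination ((d 1 m)^2 * m * δ^3) * mA d h1 h2 h3 n
        + (n * δ^3) * mB d h1 h2 h3 m + (n * d 1 m * (δ + 1)) * hδ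
  rw [key]
  linear_combination (m * d 1 n) * hδ

omit h1 h2 h3 in
lemma bzero : MBasic d (0 : R) := ⟨[], by simp⟩

omit h1 h2 h3 in
lemma bfrac (p q : ℤ) : MBasic d ((p : R) * d 1 (q : R)) := ⟨[(p, q)], by simp⟩

omit h1 h2 h3 in
lemma badd {a b : R} (hA : MBasic d a) (hB : MBasic d b) : MBasic d (a + b) := by
  obtain ⟨L1, rfl⟩ := hA; obtain ⟨L2, rfl⟩ := hB
  exact ⟨L1 ++ L2, by simp⟩

omit h1 h2 h3 in
lemma bneg {a : R} (hA : MBasic d a) : MBasic d (-a) := by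
  obtain ⟨L, rfl⟩ := hA
  refine ⟨L.map (fun pq => (-pq.1, pq.2)), ?_⟩
  induction L with
  | nil => simp
  | cons hd tl ih =>
    simp only [List.map_cons, List.sum_cons] at *
    push_cast
    rw [neg_add]
    rw [show -((hd.1 : R) * d 1 (hd.2 : R)) = -(hd.1 : R) * d 1 (hd.2 : R) by ring, ih]

lemma bone : MBasic d (1 : R) := by
  have := bfrac d (1 : ℤ) (1 : ℤ)
  simpa [mi1 d h1 h2 h3] using this

lemma bfracmul (p q : ℤ) {b : R} (hB : MBasic d b) :
    MBasic d ((p : R) * d 1 (q : R) * b) := by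
  obtain ⟨L2, rfl⟩ := hB
  induction L2 with
  | nil => simpa using bzero d
  | cons hd2 tl2 ih2 =>
    simp only [List.map_cons, List.sum_cons, mul_add]
    apply badd d _ ih2
    have : (p : R) * d 1 (q : R) * ((hd2.1 : R) * d 1 (hd2.2 : R))
        = ((p * hd2.1 : ℤ) : R) * d 1 ((q * hd2.2 : ℤ) : R) := by
      push_cast
      rw [mimul d h1 h2 h3]
      ring
    rw [this]
    exact bfrac d _ _

lemma bmul {a b : R} (hA : MBasic d a) (hB : MBasic d b) : MBasic d (a * b) := by
  obtain ⟨L1, rfl⟩ := hA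
  induction L1 with
  | nil => simpa using bzero d
  | cons hd tl ih =>
    simp only [List.map_cons, List.sum_cons, add_mul]
    exact badd d (bfracmul d h1 h2 h3 hd.1 hd.2 hB) ih
end Meadow

set_option linter.unusedSectionVars false
set_option maxHeartbeats 1000000

section MeadowMain
variable {R : Type*} [CommRing R] (d : R → R → R)
variable (h1 : ∀ x : R, d 1 (d 1 x) = x) (h2 : ∀ x : R, d (x * x) x = x)
  (h3 : ∀ x y : R, d x y = x * d 1 y)
include h1 h2 h3

lemma maux (L : List (ℤ × ℤ)) : ∀ (N M : ℤ) (δ : R), MBasic d δ → δ * δ = δ →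
    (M : R) * d 1 (M : R) * δ = δ →
    MBasic d (δ * d 1 (((L.map (fun pq => (pq.1 : R) * d 1 (pq.2 : R))).sum
      + (N : R) * d 1 (M : R)) * δ)) := by
  induction L with
  | nil =>
    intro N M δ hb hδ hM
    rw [show ((List.map (fun pq => ((pq.1 : ℤ) : R) * d 1 ((pq.2 : ℤ) : R))
        ([] : List (ℤ × ℤ))).sum + (N : R) * d 1 (M : R)) = (N : R) * d 1 (M : R) by simp]
    rw [mibase d h1 h2 h3 _ _ _ hδ hM]
    exact bmul d h1 h2 h3 (bfrac d M N) hb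
  | cons hd tl ih =>
    intro N M δ hb hδ hM
    obtain ⟨n, m⟩ := hd
    have hAm := mA d h1 h2 h3 ((m : ℤ) : R)
    have hBm := mB d h1 h2 h3 ((m : ℤ) : R)
    have hee : ((m : ℤ) : R) * d 1 ((m : ℤ) : R) * (((m : ℤ) : R) * d 1 ((m : ℤ) : R))
        = ((m : ℤ) : R) * d 1 ((m : ℤ) : R) := by
      linear_combination d 1 ((m : ℤ) : R) * hAm
    have hδ₁ : (δ * ((m : R) * d 1 (m : R))) * (δ * ((m : R) * d 1 (m : R)))
        = δ * ((m : R) * d 1 (m : R)) := by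
      linear_combination (((m : R) * d 1 (m : R)) * ((m : R) * d 1 (m : R))) * hδ + δ * hee
    have hδ₂ : (δ * (1 - (m : R) * d 1 (m : R))) * (δ * (1 - (m : R) * d 1 (m : R)))
        = δ * (1 - (m : R) * d 1 (m : R)) := by
      linear_combination ((1 - (m : R) * d 1 (m : R)) * (1 - (m : R) * d 1 (m : R))) * hδ
        + δ * hee
    have hb₁ : MBasic d (δ * ((m : R) * d 1 (m : R))) :=
      bmul d h1 h2 h3 hb (bfrac d m m)
    have hb₂ : MBasic d (δ * (1 - (m : R) * d 1 (m : R))) := by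
      have hrw : δ * (1 - (m : R) * d 1 (m : R)) = δ + -(δ * ((m : R) * d 1 (m : R))) := by ring
      rw [hrw]
      exact badd d hb (bneg d hb₁)
    have hM₁ : ((M * m : ℤ) : R) * d 1 ((M * m : ℤ) : R) * (δ * ((m : R) * d 1 (m : R)))
        = δ * ((m : R) * d 1 (m : R)) := by
      push_cast
      rw [mimul d h1 h2 h3]
      linear_combination (((m : R))^2 * (d 1 ((m : ℤ) : R))^2) * hM
        + (δ * d 1 ((m : ℤ) : R)) * hAm
    have hM₂ : (M : R) * d 1 (M : R) * (δ * (1 - (m : R) * d 1 (m : R)))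
        = δ * (1 - (m : R) * d 1 (m : R)) := by
      linear_combination (1 - (m : R) * d 1 (m : R)) * hM
    simp only [List.map_cons, List.sum_cons]
    set S : R := (tl.map (fun pq => ((pq.1 : ℤ) : R) * d 1 ((pq.2 : ℤ) : R))).sum with hS
    have eq₁ : ((n : R) * d 1 (m : R) + S + (N : R) * d 1 (M : R)) * (δ * ((m : R) * d 1 (m : R)))
        = (S + ((N * m + n * M : ℤ) : R) * d 1 ((M * m : ℤ) : R))
          * (δ * ((m : R) * d 1 (m : R))) := by
      push_cast
      rw [mimul d h1 h2 h3]
      linear_combination (-((n : R) * (m : R) * (d 1 ((m : ℤ) : R))^2)) * hM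
        + (-((N : R) * d 1 ((M : ℤ) : R) * δ * d 1 ((m : ℤ) : R))) * hAm
    have eq₂ : ((n : R) * d 1 (m : R) + S + (N : R) * d 1 (M : R))
          * (δ * (1 - (m : R) * d 1 (m : R)))
        = (S + (N : R) * d 1 (M : R)) * (δ * (1 - (m : R) * d 1 (m : R))) := by
      linear_combination (-((n : R) * δ)) * hBm
    have split := msplit d h1 h2 h3
      (((n : R) * d 1 (m : R) + S + (N : R) * d 1 (M : R)) * δ) ((m : R) * d 1 (m : R)) hee
    have key : δ * d 1 (((n : R) * d 1 (m : R) + S + (N : R) * d 1 (M : R)) * δ)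
        = (δ * ((m : R) * d 1 (m : R)))
            * d 1 ((S + ((N * m + n * M : ℤ) : R) * d 1 ((M * m : ℤ) : R))
              * (δ * ((m : R) * d 1 (m : R))))
          + (δ * (1 - (m : R) * d 1 (m : R)))
            * d 1 ((S + (N : R) * d 1 (M : R)) * (δ * (1 - (m : R) * d 1 (m : R)))) := by
      rw [split, ← eq₁, ← eq₂, mul_assoc, mul_assoc]
      ring_nf
    rw [key]
    exact badd d (ih (N * m + n * M) (M * m) _ hb₁ hδ₁ hM₁) (ih N M _ hb₂ hδ₂ hM₂)

lemma binv {a : R} (hA : MBasic d a) : MBasic d (d 1 a) := by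
  obtain ⟨L, rfl⟩ := hA
  have := maux d h1 h2 h3 L 0 1 1 (bone d h1 h2 h3) (by ring)
    (by simp [mi1 d h1 h2 h3])
  simpa [mi1 d h1 h2 h3] using this

end MeadowMain
theorem basic_term_normal_form {R : Type*} [CommRing R] (d : R → R → R)
    (h1 : ∀ x : R, d 1 (d 1 x) = x) (h2 : ∀ x : R, d (x * x) x = x)
    (h3 : ∀ x y : R, d x y = x * d 1 y)
    (a : R)
    (ha : ∀ S : Subring R, (∀ x y : R, x ∈ S → y ∈ S → d x y ∈ S) → a ∈ S) :
    ∃ L : List (ℤ × ℤ), a = (L.map (fun pq => d ((pq.1 : R)) ((pq.2 : R)))).sum := by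
  classical
  set S : Subring R :=
    { carrier := {x | MBasic d x}
      zero_mem' := bzero d
      one_mem' := bone d h1 h2 h3
      add_mem' := fun hx hy => badd d hx hy
      neg_mem' := fun hx => bneg d hx
      mul_mem' := fun hx hy => bmul d h1 h2 h3 hx hy } with hSdef
  have hclosed : ∀ x y : R, x ∈ S → y ∈ S → d x y ∈ S := by
    intro x y hx hy
    show MBasic d (d x y)
    rw [h3]
    exact bmul d h1 h2 h3 hx (binv d h1 h2 h3 hy)
  have hmem : MBasic d a := ha S hclosed
  obtain ⟨L, hL⟩ := hmem
  refine ⟨L, ?_⟩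
  rw [hL]
  clear hL
  induction L with
  | nil => simp
  | cons hd tl ih =>
    simp only [List.map_cons, List.sum_cons]
    rw [h3 ((hd.1 : ℤ) : R) ((hd.2 : ℤ) : R), ih]
end

section
/- Let (R, d) be an infinite minimal divisive meadow, i.e., R is infinite and the only subring of R closed under d (x, y ∈ S implies d x y ∈ S) is R itself. Then ℚ is a homomorphic image of R: there exists a surjective ring homomorphism φ : R → ℚ such that φ (d x y) = φ x / φ y for all x, y ∈ R, where / is the zero-totalized division of ℚ (a/0 = 0, as in Mathlib). -/
section MeadowAux

variable {R : Type*} [CommRing R]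

lemma meadow_pow (i : R → R) (hsq : ∀ x : R, x * x * i x = x) (x : R) :
    ∀ k : ℕ, x = x ^ (k + 1) * (i x) ^ k := by
  intro k
  induction k with
  | zero => simp
  | succ k ih =>
    calc x = x * x * i x := (hsq x).symm
    _ = (x ^ (k + 1) * (i x) ^ k) * x * i x := by rw [← ih]
    _ = x ^ (k + 1 + 1) * (i x) ^ (k + 1) := by ring

lemma meadow_reduced (i : R → R) (hsq : ∀ x : R, x * x * i x = x) : IsReduced R := by
  refine ⟨fun x hx => ?_⟩
  obtain ⟨m, hm⟩ := hx
  have h := meadow_pow i hsq x m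
  rw [pow_succ, hm] at h
  simpa using h

lemma meadow_hom_inv (i : R → R) (hii : ∀ x : R, i (i x) = x)
    (hsq : ∀ x : R, x * x * i x = x) {K : Type*} [Field K] (ψ : R →+* K) (y : R) :
    ψ (i y) = (ψ y)⁻¹ := by
  rcases eq_or_ne (ψ y) 0 with h | h
  · have h2 := congrArg ψ (hsq (i y))
    rw [hii] at h2
    rw [map_mul, map_mul, h, mul_zero] at h2
    rw [h, inv_zero, ← h2]
  · have h2 := congrArg ψ (hsq y)
    rw [map_mul, map_mul] at h2
    have : ψ y * ψ (i y) = 1 := by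
      apply mul_left_cancel₀ h
      rw [← mul_assoc, h2, mul_one]
    exact eq_inv_of_mul_eq_one_left (by rw [mul_comm] at this; exact this)

/-- In a minimal divisive meadow, the image of any ring hom into a field lands inside
any subring of the field that is closed under (zero-totalized) division. -/
lemma meadow_range (d : R → R → R)
    (h1 : ∀ x : R, d 1 (d 1 x) = x) (h2 : ∀ x : R, d (x * x) x = x)
    (h3 : ∀ x y : R, d x y = x * d 1 y)
    (hmin : ∀ S : Subring R, (∀ x y : R, x ∈ S → y ∈ S → d x y ∈ S) → S = ⊤)
    {K : Type*} [Field K] (ψ : R →+* K) (F : Subring K)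
    (hF : ∀ a ∈ F, ∀ b ∈ F, a / b ∈ F) : ∀ x, ψ x ∈ F := by
  have hii : ∀ x : R, d 1 (d 1 x) = x := h1
  have hsq : ∀ x : R, x * x * d 1 x = x := fun x => by rw [← h3]; exact h2 x
  intro x
  have hS : F.comap ψ = ⊤ := by
    apply hmin
    intro a b ha hb
    rw [Subring.mem_comap] at *
    rw [h3, map_mul, meadow_hom_inv (d 1) hii hsq ψ b, ← div_eq_mul_inv]
    exact hF _ ha _ hb
  have : x ∈ F.comap ψ := by rw [hS]; trivial
  rwa [Subring.mem_comap] at this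

end MeadowAux

theorem rat_homomorphic_image_of_infinite_minimal {R : Type*} [CommRing R]
    (d : R → R → R)
    (h1 : ∀ x : R, d 1 (d 1 x) = x) (h2 : ∀ x : R, d (x * x) x = x)
    (h3 : ∀ x y : R, d x y = x * d 1 y)
    (hinf : Infinite R)
    (hmin : ∀ S : Subring R, (∀ x y : R, x ∈ S → y ∈ S → d x y ∈ S) → S = ⊤) :
    ∃ φ : R →+* ℚ, Function.Surjective φ ∧ ∀ x y : R, φ (d x y) = φ x / φ y := by
  have hii : ∀ x : R, d 1 (d 1 x) = x := h1
  have hsq : ∀ x : R, x * x * d 1 x = x := fun x => by rw [← h3]; exact h2 x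
  by_cases hchar : ∀ n : ℕ, 0 < n → (n : R) ≠ 0
  · -- characteristic zero case
    -- the multiplicative set of positive naturals
    set M : Submonoid R :=
      { carrier := {x | ∃ n : ℕ, 0 < n ∧ (n : R) = x}
        one_mem' := ⟨1, one_pos, by simp⟩
        mul_mem' := by
          rintro a b ⟨n, hn, rfl⟩ ⟨m, hm, rfl⟩
          exact ⟨n * m, Nat.mul_pos hn hm, by push_cast; ring⟩ } with hM
    have hdisj : Disjoint ((⊥ : Ideal R) : Set R) (M : Set R) := by
      rw [Set.disjoint_left]
      rintro x hx ⟨n, hn, hnx⟩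
      rw [SetLike.mem_coe, Ideal.mem_bot] at hx
      exact hchar n hn (by rw [hnx, hx])
    obtain ⟨P, hP, -, hPdisj⟩ := Ideal.exists_le_prime_disjoint ⊥ M hdisj
    haveI := hP
    set K := FractionRing (R ⧸ P)
    set ψ : R →+* K := (algebraMap (R ⧸ P) K).comp (Ideal.Quotient.mk P)
    have hker : ∀ z : R, ψ z = 0 → z ∈ P := by
      intro z hz
      have hinj := IsFractionRing.injective (R ⧸ P) K
      have : (algebraMap (R ⧸ P) K) (Ideal.Quotient.mk P z) = (algebraMap (R ⧸ P) K) 0 := by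
        rw [map_zero]; exact hz
      have := hinj this
      rwa [← Ideal.Quotient.eq_zero_iff_mem]
    haveI : CharZero K := by
      apply charZero_of_inj_zero
      intro n hn
      by_contra hne
      have hpos : 0 < n := Nat.pos_of_ne_zero hne
      have : ψ (n : R) = 0 := by rw [map_natCast]; exact_mod_cast hn
      have hmem : (n : R) ∈ P := hker _ this
      exact Set.disjoint_left.mp hPdisj hmem ⟨n, hpos, rfl⟩
    set F : Subring K := (Rat.castHom K).range
    have hF : ∀ a ∈ F, ∀ b ∈ F, a / b ∈ F := by
      rintro a ⟨q, rfl⟩ b ⟨r, rfl⟩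
      exact ⟨q / r, map_div₀ _ _ _⟩
    have hall : ∀ x, ψ x ∈ F := meadow_range d h1 h2 h3 hmin ψ F hF
    have hex : ∀ x, ∃ q : ℚ, (q : K) = ψ x := by
      intro x
      obtain ⟨q, hq⟩ := hall x
      exact ⟨q, hq⟩
    choose g hg using hex
    have cinj : Function.Injective ((↑) : ℚ → K) := Rat.cast_injective
    refine ⟨{
      toFun := g
      map_one' := cinj (by rw [hg, map_one, Rat.cast_one])
      map_mul' := fun a b => cinj (by rw [Rat.cast_mul, hg, hg, hg, map_mul])
      map_zero' := cinj (by rw [hg, map_zero, Rat.cast_zero])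
      map_add' := fun a b => cinj (by rw [Rat.cast_add, hg, hg, hg, map_add]) }, ?_, ?_⟩
    · intro q
      refine ⟨d ((q.num : ℤ) : R) ((q.den : ℕ) : R), ?_⟩
      apply cinj
      show ((g _ : ℚ) : K) = (q : K)
      rw [hg, h3, map_mul, meadow_hom_inv (d 1) hii hsq ψ, map_intCast, map_natCast,
        Rat.cast_def, div_eq_mul_inv]
    · intro x y
      apply cinj
      show ((g (d x y) : ℚ) : K) = ((g x / g y : ℚ) : K)
      rw [Rat.cast_div, hg, hg, hg, h3, map_mul, meadow_hom_inv (d 1) hii hsq ψ,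
        div_eq_mul_inv]
  · push_neg at hchar
    obtain ⟨n, hn, hn0⟩ := hchar
    exfalso
    set L := (n + 1).factorial with hL
    have hL2 : 2 ≤ L := by
      calc 2 = Nat.factorial 2 := rfl
      _ ≤ L := Nat.factorial_le (by omega)
    -- key identity : d 1 x = x ^ (L - 1)
    have hI : ∀ x : R, d 1 x = x ^ (L - 1) := by
      intro x
      have hred : IsReduced R := meadow_reduced (d 1) hsq
      have hnil : IsNilpotent (d 1 x - x ^ (L - 1)) := by
        rw [nilpotent_iff_mem_prime]
        intro J hJ
        haveI := hJ
        set K := FractionRing (R ⧸ J)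
        set ψ : R →+* K := (algebraMap (R ⧸ J) K).comp (Ideal.Quotient.mk J)
        have hnK : (n : K) = 0 := by
          rw [← map_natCast ψ, hn0, map_zero]
        set p := ringChar K with hpdef
        haveI : CharP K p := ringChar.charP K
        have hp : p.Prime := by
          rcases CharP.char_is_prime_or_zero K p with h | h
          · exact h
          · exfalso
            haveI : CharP K 0 := h ▸ ringChar.charP K
            haveI : CharZero K := CharP.charP_to_charZero K
            exact hn.ne' (Nat.cast_injective (by rw [hnK, Nat.cast_zero]))
        have hpn : p ∣ n := (CharP.cast_eq_zero_iff K p n).mp hnK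
        haveI : Fact p.Prime := ⟨hp⟩
        set F : Subring K := (ZMod.castHom (dvd_refl p) K).range
        have hF : ∀ a ∈ F, ∀ b ∈ F, a / b ∈ F := by
          rintro a ⟨u, rfl⟩ b ⟨v, rfl⟩
          exact ⟨u / v, map_div₀ _ _ _⟩
        have hall : ∀ z, ψ z ∈ F := meadow_range d h1 h2 h3 hmin ψ F hF
        obtain ⟨a, ha⟩ := hall x
        set b := ψ x with hb
        have hbp : b ^ p = b := by rw [← ha, ← map_pow, ZMod.pow_card a]
        -- show ψ (d 1 x - x ^ (L-1)) = 0
        have hinv : b⁻¹ = b ^ (L - 1) := by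
          rcases eq_or_ne b 0 with h0 | h0
          · rw [h0, inv_zero, zero_pow (by omega)]
          · have hb1 : b ^ (p - 1) = 1 := by
              have : b ^ (p - 1) * b = 1 * b := by
                rw [one_mul, ← pow_succ]
                have : p - 1 + 1 = p := Nat.succ_pred_eq_of_pos hp.pos
                rw [this, hbp]
              exact mul_right_cancel₀ h0 this
            have hp2 : 2 ≤ p := hp.two_le
            have hple : p ≤ n := Nat.le_of_dvd hn hpn
            have hdL : (p - 1) ∣ L := by
              apply Nat.dvd_factorial <;> omega
            obtain ⟨t, ht⟩ := hdL
            have hbL : b ^ L = 1 := by rw [ht, pow_mul, hb1, one_pow]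
            have : b ^ (L - 1) * b = 1 := by
              rw [← pow_succ]
              have : L - 1 + 1 = L := Nat.succ_pred_eq_of_pos (lt_of_lt_of_le two_pos hL2)
              rw [this, hbL]
            exact (eq_inv_of_mul_eq_one_left this).symm
        have hzero : ψ (d 1 x - x ^ (L - 1)) = 0 := by
          rw [map_sub, map_pow, meadow_hom_inv (d 1) hii hsq ψ x, hinv]
          exact sub_self _
        -- kernel
        have hinj := IsFractionRing.injective (R ⧸ J) K
        have : (algebraMap (R ⧸ J) K) (Ideal.Quotient.mk J (d 1 x - x ^ (L - 1)))
            = (algebraMap (R ⧸ J) K) 0 := by rw [map_zero]; exact hzero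
        have := hinj this
        rwa [← Ideal.Quotient.eq_zero_iff_mem]
      have := hred.eq_zero _ hnil
      exact sub_eq_zero.mp this
    -- the prime subring is closed under d, hence R is the prime subring
    have hbot : (⊥ : Subring R) = ⊤ := by
      apply hmin
      intro x y hx hy
      rw [h3, hI y]
      exact Subring.mul_mem _ hx (Subring.pow_mem _ hy _)
    have hint : ∀ x : R, ∃ k : ℤ, (k : R) = x := by
      intro x
      have : x ∈ (⊥ : Subring R) := by rw [hbot]; trivial
      rwa [Subring.mem_bot] at this
    have hsurj : Function.Surjective (fun j : Fin n => ((j : ℕ) : R)) := by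
      intro x
      obtain ⟨k, rfl⟩ := hint x
      have hnz : (n : ℤ) ≠ 0 := by exact_mod_cast hn.ne'
      have hmod : 0 ≤ k % (n : ℤ) := Int.emod_nonneg k hnz
      have hlt : k % (n : ℤ) < (n : ℤ) := Int.emod_lt_of_pos k (by exact_mod_cast hn)
      refine ⟨⟨(k % (n : ℤ)).toNat, ?_⟩, ?_⟩
      · omega
      · show (((k % (n : ℤ)).toNat : ℕ) : R) = (k : R)
        have h1' : ((((k % (n : ℤ)).toNat : ℕ) : ℤ) : R) = ((k % (n : ℤ) : ℤ) : R) := by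
          rw [Int.toNat_of_nonneg hmod]
        have h2' : ((k : ℤ) : R) = ((k % (n : ℤ) : ℤ) : R)
            + ((n : ℤ) : R) * ((k / (n : ℤ) : ℤ) : R) := by
          rw [← Int.cast_mul, ← Int.cast_add, Int.emod_add_mul_ediv k (n : ℤ)]
        have h3' : (((n : ℕ) : ℤ) : R) = 0 := by rw [Int.cast_natCast, hn0]
        rw [← Int.cast_natCast, h1', h2', h3', zero_mul, add_zero]
    exact (not_finite_iff_infinite.mpr hinf) (Finite.of_surjective _ hsurj)
end

section
/- Let (R, d) be a finite divisive meadow (the carrier R is a finite set). Then there exists a positive integer n such that d 1 x = x^n for all x ∈ R. Consequently, every finite divisive meadow admits transformation into simple fractions: every term over the signature of divisive meadows is equivalent in R to a quotient of two division-free terms. -/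
private lemma exists_idem_pow_single {R : Type*} [CommMonoid R] [Finite R] (x : R) :
    ∃ n : ℕ, 0 < n ∧ x ^ (2 * n) = x ^ n := by
  obtain ⟨a, b, hab, h⟩ := Finite.exists_ne_map_eq_of_infinite (fun n : ℕ => x ^ n)
  wlog hlt : a < b generalizing a b
  · exact this b a hab.symm h.symm (by omega)
  set p := b - a with hp
  have hppos : 0 < p := by omega
  have hstep : ∀ m, a ≤ m → x ^ (m + p) = x ^ m := by
    intro m hm
    obtain ⟨t, rfl⟩ := Nat.exists_eq_add_of_le hm
    have hb : b = a + p := by omega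
    calc x ^ (a + t + p) = x ^ b * x ^ t := by rw [hb, ← pow_add]; ring_nf
      _ = x ^ a * x ^ t := by rw [← h]
      _ = x ^ (a + t) := by rw [← pow_add]
  have hiter : ∀ k m, a ≤ m → x ^ (m + k * p) = x ^ m := by
    intro k
    induction k with
    | zero => simp
    | succ n ih =>
      intro m hm
      have he : m + (n + 1) * p = (m + p) + n * p := by ring
      rw [he, ih (m + p) (by omega), hstep m hm]
  refine ⟨(a + 1) * p, by positivity, ?_⟩
  have he : 2 * ((a + 1) * p) = (a + 1) * p + (a + 1) * p := by ring
  rw [he]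
  exact hiter (a + 1) ((a + 1) * p) (by nlinarith)

private lemma exists_idem_pow {R : Type*} [CommMonoid R] [Finite R] :
    ∃ N : ℕ, 0 < N ∧ ∀ x : R, x ^ (2 * N) = x ^ N := by
  haveI := Fintype.ofFinite R
  choose f hf1 hf2 using fun x : R => exists_idem_pow_single x
  refine ⟨∏ x : R, f x, Finset.prod_pos (fun x _ => hf1 x), fun x => ?_⟩
  obtain ⟨c, hc⟩ := Finset.dvd_prod_of_mem f (Finset.mem_univ x)
  rw [hc]
  calc x ^ (2 * (f x * c)) = (x ^ (2 * f x)) ^ c := by rw [← pow_mul]; ring_nf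
    _ = (x ^ f x) ^ c := by rw [hf2]
    _ = x ^ (f x * c) := by rw [← pow_mul]

theorem finite_meadow_inverse_is_power {R : Type*} [CommRing R] [Finite R]
    (d : R → R → R)
    (h1 : ∀ x : R, d 1 (d 1 x) = x) (h2 : ∀ x : R, d (x * x) x = x)
    (h3 : ∀ x y : R, d x y = x * d 1 y) :
    ∃ n : ℕ, 0 < n ∧ ∀ x : R, d 1 x = x ^ n := by
  set i : R → R := fun x => d 1 x with hi
  have key : ∀ x : R, x * x * i x = x := by
    intro x; have := h2 x; rwa [h3] at this
  have key2 : ∀ x : R, i x * i x * x = i x := by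
    intro x
    have := key (i x)
    simp only [hi] at this ⊢
    rwa [h1] at this
  have hB : ∀ (k : ℕ) (x : R), i x = (i x) ^ (k + 1) * x ^ k := by
    intro k
    induction k with
    | zero => intro x; simp
    | succ n ih =>
      intro x
      symm
      calc (i x) ^ (n + 2) * x ^ (n + 1)
          = ((i x) ^ n * x ^ n) * (i x * i x * x) := by ring
        _ = (i x) ^ n * x ^ n * i x := by rw [key2]
        _ = (i x) ^ (n + 1) * x ^ n := by ring
        _ = i x := (ih x).symm
  obtain ⟨N, hNpos, hN⟩ := exists_idem_pow (R := R)
  obtain ⟨M, rfl⟩ : ∃ M, N = M + 1 := ⟨N - 1, by omega⟩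
  refine ⟨2 * M + 1, by omega, fun x => ?_⟩
  have step1 : i x * x ^ (M + 1) = i x := by
    calc i x * x ^ (M + 1) = ((i x) ^ (M + 2) * x ^ (M + 1)) * x ^ (M + 1) := by
          rw [← hB (M + 1) x]
      _ = (i x) ^ (M + 2) * x ^ (2 * (M + 1)) := by rw [mul_assoc, ← pow_add]; ring_nf
      _ = (i x) ^ (M + 2) * x ^ (M + 1) := by rw [hN]
      _ = i x := (hB (M + 1) x).symm
  show i x = x ^ (2 * M + 1)
  calc i x = i x * x ^ (M + 1) := step1.symm
    _ = i x * x ^ (2 * (M + 1)) := by rw [hN]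
    _ = x ^ (2 * M) * (x * x * i x) := by
          have he : 2 * (M + 1) = 2 * M + 1 + 1 := by ring
          rw [he, pow_succ, pow_succ]; ring
    _ = x ^ (2 * M) * x := by rw [key]
    _ = x ^ (2 * M + 1) := by rw [pow_succ]
end

section
/- There do not exist polynomials f, g ∈ ℤ[X] such that for all x ∈ ℚ, 1 + 1/x = f̄(x) / ḡ(x), where f̄ and ḡ denote the images of f and g in ℚ[X] under the canonical map ℤ → ℚ, and / is the zero-totalized division of ℚ (a/0 = 0, as in Mathlib). Hence the divisive meadow of rational numbers does not admit transformation into simple fractions: the fraction 1 + 1/x is not equivalent over ℚ to any simple fraction. -/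
theorem rat_no_simple_fraction :
    ¬ ∃ f g : Polynomial ℤ, ∀ x : ℚ,
      1 + 1 / x =
        Polynomial.eval₂ (Int.castRingHom ℚ) x f /
          Polynomial.eval₂ (Int.castRingHom ℚ) x g := by
  rintro ⟨f, g, h⟩
  set F := f.map (Int.castRingHom ℚ) with hFdef
  set G := g.map (Int.castRingHom ℚ) with hGdef
  have heval : ∀ x : ℚ, 1 + 1 / x = F.eval x / G.eval x := by
    intro x
    rw [hFdef, hGdef, Polynomial.eval_map, Polynomial.eval_map]
    exact h x
  have h0 := heval 0
  simp only [div_zero, add_zero] at h0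
  have hG0 : G.eval 0 ≠ 0 := by
    intro hz
    rw [hz, div_zero] at h0
    exact one_ne_zero h0
  have hGne : G ≠ 0 := fun hz => hG0 (by rw [hz]; simp)
  set P := (Polynomial.X + 1) * G - Polynomial.X * F with hPdef
  have key : ∀ x : ℚ, x ≠ 0 → G.eval x ≠ 0 → P.IsRoot x := by
    intro x hx hgx
    have hx' := heval x
    field_simp at hx'
    · simp only [Polynomial.IsRoot, hPdef, Polynomial.eval_sub, Polynomial.eval_mul,
        Polynomial.eval_add, Polynomial.eval_X, Polynomial.eval_one]
      nlinarith [hx']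
  have hfin : ({(0:ℚ)} ∪ {x : ℚ | G.IsRoot x}).Finite :=
    (Set.finite_singleton 0).union (Polynomial.finite_setOf_isRoot hGne)
  have hProots : {x : ℚ | P.IsRoot x}.Infinite := by
    apply Set.Infinite.mono _ hfin.infinite_compl
    intro x hx
    simp only [Set.mem_compl_iff, Set.mem_union, Set.mem_singleton_iff, Set.mem_setOf_eq,
      not_or] at hx
    exact key x hx.1 hx.2
  have hPz : P = 0 := P.eq_zero_of_infinite_isRoot hProots
  have h00 := congrArg (Polynomial.eval 0) hPz
  simp [hPdef] at h00
  exact hG0 h00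
end

section
/- Let (R, d) be a divisive meadow of characteristic 0, i.e., (k : R) ≠ 0 for every positive integer k. Then there do not exist polynomials f, g ∈ ℤ[X] such that for all x ∈ R, 1 + d 1 x = d (f̄(x)) (ḡ(x)), where f̄ and ḡ denote the images of f and g in R[X] under the canonical map ℤ → R. Hence a divisive meadow of characteristic 0 does not admit transformation into simple fractions. -/
theorem char_zero_meadow_no_simple_fraction {R : Type*} [CommRing R]
    (d : R → R → R)
    (h1 : ∀ x : R, d 1 (d 1 x) = x) (h2 : ∀ x : R, d (x * x) x = x)
    (h3 : ∀ x y : R, d x y = x * d 1 y)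
    (hchar : ∀ k : ℕ, 0 < k → (k : R) ≠ 0) :
    ¬ ∃ f g : Polynomial ℤ, ∀ x : R,
      1 + d 1 x =
        d (Polynomial.eval₂ (Int.castRingHom R) x f)
          (Polynomial.eval₂ (Int.castRingHom R) x g) := by
  rintro ⟨f, g, hfg⟩
  have law : ∀ x : R, x * x * d 1 x = x := fun x =>
    (h3 (x * x) x).symm.trans (h2 x)
  have i0 : d 1 0 = 0 := by
    have h := law (d 1 0); rw [h1 0] at h
    have h' : (0 : R) = d 1 0 := by simpa using h
    exact h'.symm
  have iinv : ∀ x : R, d 1 x * d 1 x * x = d 1 x := fun x => by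
    have h := law (d 1 x); rwa [h1 x] at h
  set F : R → R := fun x => Polynomial.eval₂ (Int.castRingHom R) x f with hF
  set G : R → R := fun x => Polynomial.eval₂ (Int.castRingHom R) x g with hG
  have key : ∀ x : R, 1 + d 1 x = F x * d 1 (G x) := fun x =>
    (hfg x).trans (h3 _ _)
  -- the submonoid of positive-integer casts
  set M : Submonoid R :=
    { carrier := {x | ∃ n : ℕ, 0 < n ∧ (n : R) = x}
      mul_mem' := by
        rintro a b ⟨m, hm, rfl⟩ ⟨n, hn, rfl⟩
        exact ⟨m * n, Nat.mul_pos hm hn, by push_cast; ring⟩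
      one_mem' := ⟨1, one_pos, by norm_num⟩ } with hM
  set S := Localization M with hS
  set φ : R →+* S := algebraMap R S with hφ
  have hunit : ∀ x : R, x ∈ M → IsUnit (φ x) := fun x hx =>
    IsLocalization.map_units S (⟨x, hx⟩ : M)
  have hSnontriv : (1 : S) ≠ 0 := by
    intro h10
    have : φ 1 = 0 := by rw [map_one, h10]
    rw [IsLocalization.map_eq_zero_iff M] at this
    obtain ⟨⟨m, n, hn, rfl⟩, hm0⟩ := this
    exact hchar n hn (by simpa using hm0)
  -- casts of nonzero integers are nonzero in S
  have hintS : ∀ m : ℤ, ((m : ℤ) : S) = 0 → m = 0 := by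
    intro m hm
    by_contra hne
    have habs : ((m.natAbs : ℕ) : S) = 0 := by
      rcases Int.natAbs_eq m with h | h
      · rw [← Int.cast_natCast, ← h, hm]
      · have h2' : ((m.natAbs : ℤ) : S) = -(m : S) := by
          rw [show ((m.natAbs : ℤ)) = -m from by omega]; push_cast; ring
        rw [Int.cast_natCast] at h2'
        rw [h2', hm, neg_zero]
    have hmem : ((m.natAbs : ℕ) : R) ∈ M :=
      ⟨m.natAbs, Int.natAbs_pos.mpr hne, rfl⟩
    have hu : IsUnit (((m.natAbs : ℕ) : S)) := by
      have := hunit _ hmem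
      rwa [map_natCast] at this
    rw [habs] at hu
    obtain ⟨u, hu0⟩ := hu
    have : (1 : S) = 0 := by
      have := u.inv_mul
      rw [hu0, mul_zero] at this
      exact this.symm
    exact hSnontriv this
  -- identity (B) in R
  have eqB : ∀ x : R, x * G x + G x * (x * d 1 x) = x * F x * (G x * d 1 (G x)) := by
    intro x
    linear_combination (x * G x) * key x
  -- idempotent absorption for G x
  have eGx : ∀ x : R, (1 + d 1 x) * (G x * d 1 (G x)) = 1 + d 1 x := by
    intro x
    linear_combination (G x * d 1 (G x) - 1) * key x + F x * iinv (G x)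
  set P : Polynomial ℤ := (Polynomial.X + 1) * g - Polynomial.X * f with hP
  have hcomp : φ.comp (Int.castRingHom R) = Int.castRingHom S := RingHom.ext_int _ _
  have hevalF : ∀ x : R, φ (F x) = Polynomial.eval₂ (Int.castRingHom S) (φ x) f := by
    intro x; rw [hF]; simp only []; rw [Polynomial.hom_eval₂, hcomp]
  have hevalG : ∀ x : R, φ (G x) = Polynomial.eval₂ (Int.castRingHom S) (φ x) g := by
    intro x; rw [hG]; simp only []; rw [Polynomial.hom_eval₂, hcomp]
  have hPn : ∀ n : ℕ, 0 < n → Polynomial.eval (n : ℤ) P = 0 := by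
    intro n hn
    set x : R := (n : R) with hx
    have hun : IsUnit (φ x) := hunit x ⟨n, hn, rfl⟩
    have hen : φ x * φ (d 1 x) = 1 := by
      have hl := congrArg φ (law x)
      rw [map_mul, map_mul] at hl
      have h' : φ x * (φ x * φ (d 1 x)) = φ x * 1 := by
        linear_combination hl
      exact hun.mul_left_cancel h'
    have hun1 : IsUnit (φ (x + 1)) := by
      refine hunit _ ⟨n + 1, Nat.succ_pos n, ?_⟩
      push_cast; rw [hx]
    have hEn : φ (G x) * φ (d 1 (G x)) = 1 := by
      have he := congrArg φ (eGx x)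
      simp only [map_add, map_mul, map_one] at he
      have hmul : φ (x + 1) * (φ (G x) * φ (d 1 (G x))) = φ (x + 1) * 1 := by
        rw [map_add, map_one]
        linear_combination (φ x) * he + (1 - φ (G x) * φ (d 1 (G x))) * hen
      exact hun1.mul_left_cancel hmul
    have hB := congrArg φ (eqB x)
    simp only [map_add, map_mul] at hB
    rw [hen, hEn, mul_one, mul_one] at hB
    have hφx : φ x = ((n : ℤ) : S) := by rw [hx, map_natCast, Int.cast_natCast]
    have hFn : φ (F x) = ((Polynomial.eval (n : ℤ) f : ℤ) : S) := by
      rw [hevalF, hφx]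
      have := Polynomial.eval₂_at_apply (p := f) (Int.castRingHom S) ((n : ℤ))
      simpa using this
    have hGn : φ (G x) = ((Polynomial.eval (n : ℤ) g : ℤ) : S) := by
      rw [hevalG, hφx]
      have := Polynomial.eval₂_at_apply (p := g) (Int.castRingHom S) ((n : ℤ))
      simpa using this
    rw [hφx, hFn, hGn] at hB
    have hz : ((Polynomial.eval (n : ℤ) P : ℤ) : S) = 0 := by
      rw [hP]
      simp only [Polynomial.eval_sub, Polynomial.eval_mul, Polynomial.eval_add,
        Polynomial.eval_X, Polynomial.eval_one]
      push_cast
      push_cast at hB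
      linear_combination hB
    exact hintS _ hz
  have hP0 : P = 0 := by
    apply Polynomial.eq_zero_of_infinite_isRoot
    apply Set.Infinite.mono (s := Set.Ici (1 : ℤ))
    · intro z hz
      simp only [Set.mem_Ici] at hz
      have hz0 : 0 < z.toNat := by omega
      have h := hPn z.toNat hz0
      have hzz : ((z.toNat : ℕ) : ℤ) = z := Int.toNat_of_nonneg (by omega)
      rw [hzz] at h
      exact h
    · exact Set.Ici_infinite 1
  have hG0 : G 0 = 0 := by
    have hgf : (Polynomial.X + 1) * g = Polynomial.X * f := by
      have h := hP0
      rw [hP, sub_eq_zero] at h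
      exact h
    have h := congrArg (Polynomial.eval₂ (Int.castRingHom R) (0 : R)) hgf
    simp only [Polynomial.eval₂_mul, Polynomial.eval₂_add, Polynomial.eval₂_X,
      Polynomial.eval₂_one, zero_mul, zero_add, one_mul] at h
    rw [hG]
    exact h
  have hk := key 0
  rw [hG0, i0, mul_zero, add_zero] at hk
  exact hchar 1 one_pos (by simpa using hk)
end

section
/- Let (R, d) be a minimal divisive meadow, i.e., the only subring of R closed under d (x, y ∈ S implies d x y ∈ S) is R itself. Then R is finite if and only if there exist polynomials f, g ∈ ℤ[X] such that for all x ∈ R, 1 + d 1 x = d (f̄(x)) (ḡ(x)), where f̄ and ḡ denote the images of f and g in R[X]. In other words, a minimal divisive meadow admits transformation into simple fractions if and only if it is finite. -/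
private lemma meadow_pseudo_unique {R : Type*} [CommRing R] {a y y' : R}
    (ha : a * a * y = a) (hy : y * y * a = y)
    (ha' : a * a * y' = a) (hy' : y' * y' * a = y') : y = y' := by
  have e3 : a * y = a * y' := by
    calc a * y = (a * a * y') * y := by rw [ha']
    _ = (a * a * y) * y' := by ring
    _ = a * y' := by rw [ha]
  calc y = y * y * a := hy.symm
  _ = y * (a * y') := by rw [← e3]; ring
  _ = (a * y) * y' := by ring
  _ = (a * y') * y' := by rw [e3]
  _ = y' * y' * a := by ring
  _ = y' := hy'

private lemma meadow_pow_stab {R : Type*} [CommRing R] {a b : ℕ} (ha : 1 ≤ a) (hab : a < b) :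
    ∃ N : ℕ, 2 ≤ N ∧ ∀ y : R, y ^ a = y ^ b → y ^ (2 * N) = y ^ N := by
  set p := b - a with hp
  have hp1 : 1 ≤ p := by omega
  refine ⟨(a + 2) * p, by nlinarith, fun y hy => ?_⟩
  have step : ∀ m, a ≤ m → y ^ (m + p) = y ^ m := by
    intro m hm
    obtain ⟨t, rfl⟩ := Nat.exists_eq_add_of_le hm
    have hb' : a + p = b := by omega
    have e : a + t + p = (a + p) + t := by omega
    rw [e, pow_add, hb', ← hy, ← pow_add]
  have iter : ∀ j m, a ≤ m → y ^ (m + j * p) = y ^ m := by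
    intro j
    induction j with
    | zero => intro m _; simp
    | succ k ih =>
      intro m hm
      have e : m + (k + 1) * p = (m + k * p) + p := by ring
      rw [e, step _ (le_trans hm (Nat.le_add_right _ _)), ih m hm]
  have e2 : 2 * ((a + 2) * p) = (a + 2) * p + (a + 2) * p := by ring
  rw [e2]
  exact iter (a + 2) ((a + 2) * p) (by nlinarith)

private lemma meadow_inv_pow {R : Type*} [CommRing R] (d : R → R → R)
    (h1 : ∀ x : R, d 1 (d 1 x) = x) (h2 : ∀ x : R, d (x * x) x = x)
    (h3 : ∀ x y : R, d x y = x * d 1 y)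
    {y : R} {N : ℕ} (hN : 2 ≤ N) (hy : y ^ (2 * N) = y ^ N) :
    d 1 y = y ^ (N - 1) := by
  have hA : ∀ x : R, x * x * d 1 x = x := fun x => by rw [← h3]; exact h2 x
  have hB : ∀ x : R, d 1 x * d 1 x * x = d 1 x := fun x => by
    have := hA (d 1 x); rwa [h1] at this
  have hpow : ∀ x : R, ∀ m : ℕ, x ^ (m + 1) * (d 1 x) ^ m = x := by
    intro x m
    induction m with
    | zero => simp
    | succ k ih =>
      calc x ^ (k + 1 + 1) * d 1 x ^ (k + 1)
          = (x ^ (k + 1) * d 1 x ^ k) * (x * d 1 x) := by ring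
      _ = x * (x * d 1 x) := by rw [ih]
      _ = x := by rw [← mul_assoc]; exact hA x
  have hred : ∀ x : R, ∀ m : ℕ, x ^ (m + 1) = 0 → x = 0 := by
    intro x m hx
    have h := hpow x m
    rw [hx, zero_mul] at h
    exact h.symm
  have he : IsIdempotentElem (y ^ N) := by
    show y ^ N * y ^ N = y ^ N
    rw [← pow_add, ← two_mul, hy]
  have he' : IsIdempotentElem (1 - y ^ N) := he.one_sub
  have hidem : ∀ a : R, IsIdempotentElem a → a ^ N = a := by
    intro a ha
    have h := ha.pow_succ_eq (N - 1)
    rwa [show N - 1 + 1 = N from by omega] at h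
  have hyN1 : y ^ (N + 1) = y := by
    have hz : (y * (1 - y ^ N)) ^ N = 0 := by
      calc (y * (1 - y ^ N)) ^ N = y ^ N * (1 - y ^ N) ^ N := mul_pow _ _ _
      _ = y ^ N * (1 - y ^ N) := by rw [hidem _ he']
      _ = y ^ N - y ^ N * y ^ N := by ring
      _ = 0 := by rw [he]; ring
    have hz' : y * (1 - y ^ N) = 0 := by
      apply hred _ (N - 1)
      rwa [show N - 1 + 1 = N from by omega]
    have : y - y ^ (N + 1) = y * (1 - y ^ N) := by ring
    rw [hz'] at this
    linear_combination -this
  have hw1 : y * y * y ^ (N - 1) = y := by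
    have e1 : y * y * y ^ (N - 1) = y ^ (N - 1 + 2) := by ring
    rw [e1, show N - 1 + 2 = N + 1 from by omega, hyN1]
  have hw2 : y ^ (N - 1) * y ^ (N - 1) * y = y ^ (N - 1) := by
    have e1 : y ^ (N - 1) * y ^ (N - 1) * y = y ^ ((N - 1) + (N - 1) + 1) := by ring
    have e2 : (N - 1) + (N - 1) + 1 = (N - 2) + (N + 1) := by omega
    rw [e1, e2, pow_add, hyN1, ← pow_succ, show N - 2 + 1 = N - 1 from by omega]
  exact meadow_pseudo_unique (hA y) (hB y) hw1 hw2
theorem minimal_meadow_simple_fractions_iff_finite {R : Type*} [CommRing R]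
    (d : R → R → R)
    (h1 : ∀ x : R, d 1 (d 1 x) = x) (h2 : ∀ x : R, d (x * x) x = x)
    (h3 : ∀ x y : R, d x y = x * d 1 y)
    (hmin : ∀ S : Subring R, (∀ x y : R, x ∈ S → y ∈ S → d x y ∈ S) → S = ⊤) :
    Finite R ↔
      ∃ f g : Polynomial ℤ, ∀ x : R,
        1 + d 1 x =
          d (Polynomial.eval₂ (Int.castRingHom R) x f)
            (Polynomial.eval₂ (Int.castRingHom R) x g) := by
  have hA : ∀ x : R, x * x * d 1 x = x := fun x => by rw [← h3]; exact h2 x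
  have hB : ∀ x : R, d 1 x * d 1 x * x = d 1 x := fun x => by
    have := hA (d 1 x); rwa [h1] at this
  have hd11 : d 1 (1 : R) = 1 := by have := hA 1; simpa using this
  constructor
  · intro hfin
    haveI := hfin
    obtain ⟨m₁, m₂, hne, heq⟩ :=
      Finite.exists_ne_map_eq_of_infinite (fun m : ℕ => (fun x : R => x ^ (m + 1)))
    obtain ⟨a, b, ha, hab, hpow⟩ : ∃ a b : ℕ, 1 ≤ a ∧ a < b ∧ ∀ x : R, x ^ a = x ^ b := by
      rcases lt_or_gt_of_ne hne with h | h
      · exact ⟨m₁ + 1, m₂ + 1, by omega, by omega, fun x => congrFun heq x⟩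
      · exact ⟨m₂ + 1, m₁ + 1, by omega, by omega, fun x => (congrFun heq x).symm⟩
    obtain ⟨N, hN2, hstab⟩ := meadow_pow_stab (R := R) ha hab
    refine ⟨1 + Polynomial.X ^ (N - 1), 1, fun x => ?_⟩
    rw [meadow_inv_pow d h1 h2 h3 hN2 (hstab x (hpow x)), h3]
    simp [hd11]
  · rintro ⟨f, g, hfg⟩
    have hinv0 : d 1 (0 : R) = 0 := by have := hB 0; simpa using this.symm
    by_cases hchar : ∃ n : ℕ, 0 < n ∧ (n : R) = 0
    · obtain ⟨n, hn, hn0⟩ := hchar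
      have key : ∀ k : ℤ, ∃ i : Fin n, ((i.val : ℕ) : R) = (k : R) := by
        intro k
        have hn' : (0 : ℤ) < (n : ℤ) := by exact_mod_cast hn
        have hnn : 0 ≤ k % (n : ℤ) := Int.emod_nonneg k (ne_of_gt hn')
        have hlt : k % (n : ℤ) < (n : ℤ) := Int.emod_lt_of_pos k hn'
        refine ⟨⟨(k % (n : ℤ)).toNat, by omega⟩, ?_⟩
        have htn : (((k % (n : ℤ)).toNat : ℤ)) = k % (n : ℤ) := Int.toNat_of_nonneg hnn
        have e1 : (((k % (n : ℤ)).toNat : ℕ) : R) = ((k % (n : ℤ) : ℤ) : R) := by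
          rw [← Int.cast_natCast, htn]
        rw [e1, Int.emod_def]
        push_cast [hn0]
        ring
      have hbot : ∀ y : R, y ∈ (⊥ : Subring R) → d 1 y ∈ (⊥ : Subring R) := by
        intro y hy
        obtain ⟨k, hk⟩ := Subring.mem_bot.mp hy
        have hmem : ∀ m : ℕ, ∃ i : Fin n, ((i.val : ℕ) : R) = y ^ m := by
          intro m
          obtain ⟨i, hi⟩ := key (k ^ m)
          refine ⟨i, ?_⟩
          rw [hi]; push_cast; rw [hk]
        choose F hF using hmem
        obtain ⟨m₁, m₂, hne, heq⟩ :=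
          Finite.exists_ne_map_eq_of_infinite (fun m : ℕ => F (m + 1))
        have hyy : y ^ (m₁ + 1) = y ^ (m₂ + 1) := by
          rw [← hF (m₁ + 1), ← hF (m₂ + 1), heq]
        obtain ⟨a, b, ha, hab, hpow⟩ :
            ∃ a b : ℕ, 1 ≤ a ∧ a < b ∧ y ^ a = y ^ b := by
          rcases lt_or_gt_of_ne hne with h | h
          · exact ⟨m₁ + 1, m₂ + 1, by omega, by omega, hyy⟩
          · exact ⟨m₂ + 1, m₁ + 1, by omega, by omega, hyy.symm⟩
        obtain ⟨N, hN2, hstab⟩ := meadow_pow_stab (R := R) ha hab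
        rw [meadow_inv_pow d h1 h2 h3 hN2 (hstab y hpow)]
        exact pow_mem hy _
      have htop : (⊥ : Subring R) = ⊤ := by
        apply hmin
        intro x y hx hy
        rw [h3]
        exact mul_mem hx (hbot y hy)
      have hsurj : Function.Surjective (fun i : Fin n => ((i.val : ℕ) : R)) := by
        intro x
        have hx : x ∈ (⊥ : Subring R) := by rw [htop]; exact Subring.mem_top x
        obtain ⟨k, hk⟩ := Subring.mem_bot.mp hx
        obtain ⟨i, hi⟩ := key k
        refine ⟨i, ?_⟩
        show ((i.val : ℕ) : R) = x
        rw [hi, hk]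
      exact Finite.of_surjective _ hsurj
    · exfalso
      push_neg at hchar
      set M : Submonoid R :=
        { carrier := {x | ∃ n : ℕ, 0 < n ∧ (n : R) = x}
          one_mem' := ⟨1, one_pos, by simp⟩
          mul_mem' := by
            rintro x y ⟨n, hn, rfl⟩ ⟨m, hm, rfl⟩
            exact ⟨n * m, by positivity, by push_cast; ring⟩ } with hM
      have hdisj : Disjoint ((⊥ : Ideal R) : Set R) (M : Set R) := by
        rw [Set.disjoint_left]
        rintro x hx ⟨m, hm, hmx⟩
        exact hchar m hm (by rw [hmx, Ideal.mem_bot.mp hx])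
      obtain ⟨P, hP, _, hPdisj⟩ := Ideal.exists_le_prime_disjoint (⊥ : Ideal R) M hdisj
      haveI := hP
      set D := R ⧸ P with hD
      set π : R →+* D := Ideal.Quotient.mk P with hπdef
      have hz : ∀ c : ℤ, (c : D) = 0 → c = 0 := by
        intro c hc
        by_contra hc0
        have hmem : ((c.natAbs : ℕ) : R) ∈ M := ⟨c.natAbs, by omega, rfl⟩
        have hcD : ((c.natAbs : ℕ) : D) = 0 := by
          rcases Int.natAbs_eq c with h | h
          · have : ((c.natAbs : ℤ) : D) = 0 := by rw [← h]; exact hc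
            rwa [Int.cast_natCast] at this
          · have : ((c.natAbs : ℤ) : D) = 0 := by
              rw [show (c.natAbs : ℤ) = -c from by omega]
              push_cast
              rw [hc]; ring
            rwa [Int.cast_natCast] at this
        have hPm : ((c.natAbs : ℕ) : R) ∈ P := by
          have : π ((c.natAbs : ℕ) : R) = 0 := by rw [map_natCast]; exact hcD
          rwa [← Ideal.Quotient.eq_zero_iff_mem]
        exact Set.disjoint_left.mp hPdisj hPm hmem
      have hint : Function.Injective (Int.cast : ℤ → D) := by
        intro a b hab
        have : ((a - b : ℤ) : D) = 0 := by push_cast; rw [hab]; ring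
        have := hz _ this
        omega
      have hAD : ∀ x : R, π x * π x * π (d 1 x) = π x := fun x => by
        rw [← map_mul, ← map_mul, hA x]
      have hBD : ∀ x : R, π (d 1 x) * π (d 1 x) * π x = π (d 1 x) := fun x => by
        rw [← map_mul, ← map_mul, hB x]
      have hdom : ∀ a y : D, a * a * y = a → a ≠ 0 → a * y = 1 := by
        intro a y h ha
        have h' : a * (a * y - 1) = 0 := by linear_combination h
        rcases mul_eq_zero.mp h' with h'' | h''
        · exact absurd h'' ha
        · linear_combination h''
      have heval : ∀ (p : Polynomial ℤ) (k : ℤ),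
          π (Polynomial.eval₂ (Int.castRingHom R) ((k : ℤ) : R) p) = ((p.eval k : ℤ) : D) := by
        intro p k
        rw [Polynomial.hom_eval₂]
        have hcomp : π.comp (Int.castRingHom R) = Int.castRingHom D :=
          RingHom.ext_int _ _
        rw [hcomp, map_intCast]
        have : ((k : ℤ) : D) = (Int.castRingHom D) k := rfl
        rw [this, Polynomial.eval₂_at_apply]
        rfl
      have hkey : ∀ n : ℕ, 0 < n →
          g.eval (n : ℤ) ≠ 0 ∧ ((n : ℤ) + 1) * g.eval (n : ℤ) = (n : ℤ) * f.eval (n : ℤ) := by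
        intro n hn
        have hx := hfg (((n : ℕ) : ℤ) : R)
        rw [h3 (Polynomial.eval₂ (Int.castRingHom R) (((n : ℕ) : ℤ) : R) f)
            (Polynomial.eval₂ (Int.castRingHom R) (((n : ℕ) : ℤ) : R) g)] at hx
        have hπx := congrArg π hx
        rw [map_add, map_one, map_mul, heval f] at hπx
        set w : D := π (d 1 (((n : ℕ) : ℤ) : R)) with hw
        set z : D := π (d 1 (Polynomial.eval₂ (Int.castRingHom R) (((n : ℕ) : ℤ) : R) g)) with hzdef
        set c : D := ((g.eval ((n : ℕ) : ℤ) : ℤ) : D) with hc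
        set F : D := ((f.eval ((n : ℕ) : ℤ) : ℤ) : D) with hF
        have hBc : z * z * c = z := by
          have := hBD (Polynomial.eval₂ (Int.castRingHom R) (((n : ℕ) : ℤ) : R) g)
          rwa [heval g] at this
        have hAc : c * c * z = c := by
          have := hAD (Polynomial.eval₂ (Int.castRingHom R) (((n : ℕ) : ℤ) : R) g)
          rwa [heval g] at this
        have hnD : (((n : ℕ) : ℤ) : D) ≠ 0 := by
          intro h0
          have := hz _ h0
          omega
        have hAn : (((n : ℕ) : ℤ) : D) * (((n : ℕ) : ℤ) : D) * w = (((n : ℕ) : ℤ) : D) := by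
          have := hAD ((((n : ℕ) : ℤ) : R))
          rwa [map_intCast] at this
        by_cases hg0 : g.eval ((n : ℕ) : ℤ) = 0
        · exfalso
          have hc0 : c = 0 := by rw [hc, hg0]; simp
          have hz0 : z = 0 := by rw [← hBc, hc0]; ring
          have hw1 : w = -1 := by
            have : (1 : D) + w = 0 := by rw [hπx, hz0]; ring
            linear_combination this
          have : ((((n : ℕ) : ℤ) ^ 2 + ((n : ℕ) : ℤ) : ℤ) : D) = 0 := by
            push_cast
            push_cast at hAn
            linear_combination (-1 : D) * hAn + (((n : ℕ) : D) * ((n : ℕ) : D)) * hw1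
          have := hz _ this
          nlinarith [this, hn]
        · have hcne : c ≠ 0 := fun h0 => hg0 (hz _ h0)
          have hcz : c * z = 1 := hdom _ _ hAc hcne
          have hnw : (((n : ℕ) : ℤ) : D) * w = 1 := hdom _ _ hAn hnD
          refine ⟨hg0, ?_⟩
          have hDeq : (((((n : ℕ) : ℤ) : D)) + 1) * c = ((((n : ℕ) : ℤ) : D)) * F := by
            linear_combination ((((n : ℕ) : ℤ) : D) * c) * hπx - c * hnw + ((((n : ℕ) : ℤ) : D) * F) * hcz
          apply hint
          push_cast
          rw [← hc, ← hF]
          rw [Int.cast_natCast] at hDeq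
          linear_combination hDeq
      have hpoly : (Polynomial.X + 1) * g = Polynomial.X * f := by
        have hroot : Set.Infinite {x : ℤ | ((Polynomial.X + 1) * g - Polynomial.X * f).IsRoot x} := by
          apply Set.Infinite.mono (s := Set.Ici (1 : ℤ))
          · intro x hx
            have hx1 : 1 ≤ x := hx
            have := (hkey x.toNat (by omega)).2
            rw [show ((x.toNat : ℕ) : ℤ) = x from by omega] at this
            simp only [Set.mem_setOf_eq, Polynomial.IsRoot, Polynomial.eval_sub,
              Polynomial.eval_mul, Polynomial.eval_add, Polynomial.eval_X, Polynomial.eval_one]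
            linear_combination this
          · exact Set.Ici_infinite 1
        have := Polynomial.eq_zero_of_infinite_isRoot _ hroot
        have h0 := sub_eq_zero.mp this
        linear_combination h0
      have hg00 : g.eval 0 = 0 := by
        have := congrArg (Polynomial.eval 0) hpoly
        simpa using this
      have h0 := hfg (((0 : ℤ) : R))
      have hG0 : Polynomial.eval₂ (Int.castRingHom R) (((0 : ℤ)) : R) g = 0 := by
        have e : (((0 : ℤ)) : R) = (Int.castRingHom R) 0 := by simp
        rw [e, Polynomial.eval₂_at_apply, hg00]
        simp
      rw [hG0, h3 (Polynomial.eval₂ (Int.castRingHom R) (((0 : ℤ)) : R) f) 0, hinv0,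
        mul_zero, Int.cast_zero, hinv0, add_zero] at h0
      exact hchar 1 one_pos (by simpa using h0)
end

section
/- Let p be a prime number and let (R, d) be a divisive meadow of characteristic p, i.e., (p : R) = 0 and (0 : R) ≠ 1. Then the following are equivalent: (a) there exists a polynomial h ∈ ℤ[X] whose image h̄ in R[X] is nonzero and such that h̄(x) = 0 for every x ∈ R; (b) there exists a positive integer n such that d 1 x = x^n for all x ∈ R. (These conditions characterize the divisive meadows of prime characteristic that admit transformation into simple fractions.) -/
theorem prime_char_meadow_characterization {R : Type*} [CommRing R]
    (p : ℕ) (hp : p.Prime)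
    (d : R → R → R)
    (h1 : ∀ x : R, d 1 (d 1 x) = x) (h2 : ∀ x : R, d (x * x) x = x)
    (h3 : ∀ x y : R, d x y = x * d 1 y)
    (hcharp : (p : R) = 0) (hnt : (0 : R) ≠ 1) :
    (∃ h : Polynomial ℤ, h.map (Int.castRingHom R) ≠ 0 ∧
        ∀ x : R, Polynomial.eval₂ (Int.castRingHom R) x h = 0) ↔
      (∃ n : ℕ, 0 < n ∧ ∀ x : R, d 1 x = x ^ n) := by
  haveI : Nontrivial R := ⟨⟨0, 1, hnt⟩⟩
  have key : ∀ x : R, x * x * d 1 x = x := fun x => by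
    have := h3 (x * x) x
    rw [h2 x] at this
    exact this.symm
  constructor
  · rintro ⟨h, hmap, hroot⟩
    set H := h.map (Int.castRingHom R) with hH
    set D := H.natDegree with hD
    set N := 2 * D.factorial with hN
    have hfacpos : 0 < D.factorial := Nat.factorial_pos D
    have hN2 : 2 ≤ N := by omega
    -- Step 1: in every residue field at a maximal ideal, a^(N+1) = a
    have field_step : ∀ (m : Ideal R), m.IsMaximal → ∀ x : R,
        Ideal.Quotient.mk m (x ^ (N + 1) - x) = 0 := by
      intro m hm x
      haveI := hm
      letI : Field (R ⧸ m) := Ideal.Quotient.field m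
      set π : R →+* R ⧸ m := Ideal.Quotient.mk m with hπ
      set G : Polynomial (R ⧸ m) := h.map (Int.castRingHom (R ⧸ m)) with hG
      have hGH : G = H.map π := by
        rw [hH, Polynomial.map_map,
          (Subsingleton.elim (π.comp (Int.castRingHom R)) (Int.castRingHom (R ⧸ m)))]
      -- G is nonzero
      have hG0 : G ≠ 0 := by
        obtain ⟨i, hi⟩ : ∃ i, H.coeff i ≠ 0 := by
          by_contra hc
          push_neg at hc
          exact hmap (Polynomial.ext fun i => by rw [hc i, Polynomial.coeff_zero])
        have hiR : ((h.coeff i : ℤ) : R) ≠ 0 := by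
          rwa [hH, Polynomial.coeff_map] at hi
        have hpdvd : ¬ (p : ℤ) ∣ h.coeff i := by
          rintro ⟨k, hk⟩
          apply hiR
          rw [hk]
          push_cast
          rw [hcharp, zero_mul]
        have hcop : IsCoprime (p : ℤ) (h.coeff i) := by
          rw [Int.isCoprime_iff_gcd_eq_one, Int.gcd, Int.natAbs_natCast]
          refine (Nat.Prime.coprime_iff_not_dvd hp).mpr ?_
          intro hdvd
          exact hpdvd ((Int.natCast_dvd_natCast.mpr hdvd).trans (Int.natAbs_dvd.mpr dvd_rfl))
        obtain ⟨a, b, hab⟩ := hcop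
        intro hGz
        have hcoeffK : ((h.coeff i : ℤ) : R ⧸ m) = 0 := by
          have := congrArg (fun q => Polynomial.coeff q i) hGz
          simpa [hG, Polynomial.coeff_map] using this
        have hpK : ((p : ℕ) : R ⧸ m) = 0 := by
          rw [← map_natCast π, hcharp, map_zero]
        have : (1 : R ⧸ m) = 0 := by
          have := congrArg (fun z : ℤ => (z : R ⧸ m)) hab
          push_cast at this
          rw [hpK, hcoeffK] at this
          simpa using this.symm
        exact one_ne_zero this
      -- every element of the residue field is a root of G
      have hallroots : ∀ a : R ⧸ m, G.eval a = 0 := by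
        intro a
        obtain ⟨x, rfl⟩ := Ideal.Quotient.mk_surjective a
        rw [hGH, Polynomial.eval_map, Polynomial.eval₂_at_apply]
        have : H.eval x = 0 := by
          rw [hH, Polynomial.eval_map]; exact hroot x
        rw [this, map_zero]
      -- the residue field is finite with card ≤ D
      letI : DecidableEq (R ⧸ m) := Classical.decEq _
      have hsubset : (Set.univ : Set (R ⧸ m)) ⊆ ↑G.roots.toFinset := by
        intro a _
        simp only [Finset.coe_sort_coe, Multiset.mem_toFinset, Finset.mem_coe]
        exact Polynomial.mem_roots'.mpr ⟨hG0, hallroots a⟩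
      haveI hfinite : Finite (R ⧸ m) :=
        Set.finite_univ_iff.mp (Set.Finite.subset (G.roots.toFinset.finite_toSet) hsubset)
      letI : Fintype (R ⧸ m) := Fintype.ofFinite _
      have hcard : Fintype.card (R ⧸ m) ≤ D := by
        have e1 : (Finset.univ : Finset (R ⧸ m)).card ≤ G.roots.toFinset.card :=
          Finset.card_le_card (fun a _ =>
            Multiset.mem_toFinset.mpr (Polynomial.mem_roots'.mpr ⟨hG0, hallroots a⟩))
        have e2 : G.roots.toFinset.card ≤ Multiset.card G.roots :=
          Multiset.toFinset_card_le _
        have e3 : Multiset.card G.roots ≤ G.natDegree := Polynomial.card_roots' G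
        have e4 : G.natDegree ≤ D := by
          rw [hGH, hD]; exact Polynomial.natDegree_map_le
        calc Fintype.card (R ⧸ m) = (Finset.univ : Finset (R ⧸ m)).card := rfl
          _ ≤ G.roots.toFinset.card := e1
          _ ≤ Multiset.card G.roots := e2
          _ ≤ G.natDegree := e3
          _ ≤ D := e4
      have hc2 : 2 ≤ Fintype.card (R ⧸ m) := Fintype.one_lt_card
      -- a^(N+1) = a in the residue field
      have hfield : ∀ a : R ⧸ m, a ^ (N + 1) = a := by
        intro a
        have hdvd : (Fintype.card (R ⧸ m) - 1) ∣ N := by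
          refine Dvd.dvd.mul_left ?_ 2
          exact Nat.dvd_factorial (by omega) (by omega)
        by_cases ha : a = 0
        · rw [ha, zero_pow (by omega : N + 1 ≠ 0)]
        · obtain ⟨k, hk⟩ := hdvd
          have hone := FiniteField.pow_card_sub_one_eq_one a ha
          calc a ^ (N + 1) = (a ^ (Fintype.card (R ⧸ m) - 1)) ^ k * a := by
                rw [← pow_mul, ← hk, pow_succ]
            _ = a := by rw [hone, one_pow, one_mul]
      rw [map_sub, map_pow, sub_eq_zero]
      exact hfield (π x)
    -- Step 2: x^(N+1) = x holds in R
    have hpow : ∀ x : R, x ^ (N + 1) = x := by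
      intro x
      by_contra hne
      set t := x ^ (N + 1) - x with ht
      have ht0 : t ≠ 0 := sub_ne_zero.mpr hne
      have hkey : t * t * d 1 t = t := key t
      set e := t * d 1 t with he
      have hte : t * e = t := by rw [he]; linear_combination hkey
      have hspan : Ideal.span {1 - e} ≠ ⊤ := by
        intro htop
        rw [Ideal.span_singleton_eq_top] at htop
        obtain ⟨v, hv⟩ := isUnit_iff_exists_inv.mp htop
        apply ht0
        calc t = t * ((1 - e) * v) := by rw [hv, mul_one]
          _ = (t - t * e) * v := by ring
          _ = 0 := by rw [hte, sub_self, zero_mul]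
      obtain ⟨m, hm, hle⟩ := Ideal.exists_le_maximal _ hspan
      have h1m : (1 : R) - e ∈ m := hle (Ideal.subset_span rfl)
      have htm : t ∈ m := Ideal.Quotient.eq_zero_iff_mem.mp (field_step m hm x)
      have hem : e ∈ m := by rw [he]; exact m.mul_mem_right _ htm
      have hone : (1 : R) ∈ m := by
        have := m.add_mem h1m hem
        simpa using this
      exact hm.ne_top ((Ideal.eq_top_iff_one m).mpr hone)
    -- Step 3: conclude d 1 x = x^(N-1)
    refine ⟨N - 1, by omega, fun x => ?_⟩
    set y := d 1 x with hy
    have hy1 : x * x * y = x := key x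
    have hy2 : y * y * x = y := by
      have := key y
      rw [hy, h1 x] at this
      rw [hy]
      exact this
    set z := x ^ (N - 1) with hz
    have hz1 : x * x * z = x := by
      calc x * x * z = x ^ 2 * x ^ (N - 1) := by rw [hz]; ring
        _ = x ^ (2 + (N - 1)) := (pow_add x 2 (N - 1)).symm
        _ = x ^ (N + 1) := by rw [show 2 + (N - 1) = N + 1 by omega]
        _ = x := hpow x
    have hz2 : z * z * x = z := by
      calc z * z * x = x ^ ((N - 1) + ((N - 1) + 1)) := by
            rw [hz, pow_add, pow_add, pow_one]; ring
        _ = x ^ ((N + 1) + (N - 2)) := by rw [show (N - 1) + ((N - 1) + 1) = (N + 1) + (N - 2) by omega]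
        _ = x ^ (N + 1) * x ^ (N - 2) := pow_add x (N + 1) (N - 2)
        _ = x * x ^ (N - 2) := by rw [hpow x]
        _ = x ^ (1 + (N - 2)) := by rw [pow_add, pow_one]
        _ = x ^ (N - 1) := by rw [show 1 + (N - 2) = N - 1 by omega]
        _ = z := hz.symm
    show y = z
    linear_combination (y * z + z * z) * hy1 - (y * y + y * z) * hz1 - hy2 + hz2
  · rintro ⟨n, hn, hinv⟩
    refine ⟨Polynomial.X ^ (n + 2) - Polynomial.X, ?_, ?_⟩
    · intro hz
      have hc : (Polynomial.X ^ (n + 2) - Polynomial.X : Polynomial ℤ).coeff (n + 2) = 1 := by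
        rw [Polynomial.coeff_sub, Polynomial.coeff_X_pow, if_pos rfl,
          Polynomial.coeff_X, if_neg (by omega), sub_zero]
      have := congrArg (fun q => Polynomial.coeff q (n + 2)) hz
      simp only [Polynomial.coeff_map, Polynomial.coeff_zero] at this
      rw [hc] at this
      simp at this
    · intro x
      have hx : x ^ (n + 2) = x := by
        have := key x
        rw [hinv x] at this
        calc x ^ (n + 2) = x * x * x ^ n := by ring
          _ = x := this
      simp [Polynomial.eval₂_sub, Polynomial.eval₂_pow, Polynomial.eval₂_X, hx]
end

section
/- For every natural number n ≥ 2, there do not exist multivariate polynomials f₁, …, f_{n−1}, g₁, …, g_{n−1} ∈ ℤ[X₁, …, Xₙ] such that for all x₁, …, xₙ ∈ ℝ: 1/x₁ + ⋯ + 1/xₙ = ∑_{j=1}^{n−1} f̄ⱼ(x₁, …, xₙ) / ḡⱼ(x₁, …, xₙ), where / is the zero-totalized division of ℝ (a/0 = 0, as in Mathlib) and f̄ⱼ, ḡⱼ denote the images of fⱼ, gⱼ in ℝ[X₁, …, Xₙ]. In other words, the sum of n distinct reciprocals 1/x₁ + ⋯ + 1/xₙ is not expressible over ℝ as a sum of fewer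 than n simple fractions. -/
open MvPolynomial

namespace SumRecip

variable {n : ℕ}

/-- Substitute 0 for all variables outside `T`. -/
noncomputable def res (T : Finset (Fin n)) :
    MvPolynomial (Fin n) ℝ →ₐ[ℝ] MvPolynomial (Fin n) ℝ :=
  aeval (fun i => if i ∈ T then X i else 0)

/-- Zero out coordinates outside `T`. -/
def mask (T : Finset (Fin n)) (x : Fin n → ℝ) : Fin n → ℝ :=
  fun i => if i ∈ T then x i else 0

lemma eval_res (T : Finset (Fin n)) (x : Fin n → ℝ) (p : MvPolynomial (Fin n) ℝ) :
    eval x (res T p) = eval (mask T x) p := by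
  induction p using MvPolynomial.induction_on with
  | C a => simp [res]
  | add p q hp hq => simp [map_add, hp, hq]
  | mul_X p k hp =>
      simp only [map_mul, eval_mul, hp, eval_X]
      congr 1
      by_cases h : k ∈ T <;> simp [res, mask, h]

/-- Substitute 0 for the variable `i`. -/
noncomputable def sub0 (i : Fin n) :
    MvPolynomial (Fin n) ℝ →ₐ[ℝ] MvPolynomial (Fin n) ℝ :=
  aeval (fun k => if k = i then 0 else X k)

lemma sub0_X_self (i : Fin n) : sub0 i (X i) = 0 := by
  simp [sub0]

lemma sub0_X_ne (i k : Fin n) (h : k ≠ i) : sub0 i (X k) = X k := by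
  simp [sub0, h]

lemma X_dvd_sub_sub0 (i : Fin n) (p : MvPolynomial (Fin n) ℝ) :
    (X i : MvPolynomial (Fin n) ℝ) ∣ p - sub0 i p := by
  induction p using MvPolynomial.induction_on with
  | C a => simp [sub0]
  | add p q hp hq =>
      have h := dvd_add hp hq
      have e : p - sub0 i p + (q - sub0 i q) = p + q - sub0 i (p + q) := by
        rw [map_add]; ring
      rwa [e] at h
  | mul_X p k hp =>
      by_cases h : k = i
      · have e : p * X k - sub0 i (p * X k) = p * X k := by
          rw [map_mul, h, sub0_X_self, mul_zero, sub_zero]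
        rw [e, h]
        exact Dvd.intro_left p rfl
      · have e : p * X k - sub0 i (p * X k) = (p - sub0 i p) * X k := by
          rw [map_mul, sub0_X_ne i k h]; ring
        rw [e]
        exact hp.mul_right _

lemma X_dvd_of_sub0_eq_zero {i : Fin n} {p : MvPolynomial (Fin n) ℝ}
    (h : sub0 i p = 0) : (X i : MvPolynomial (Fin n) ℝ) ∣ p := by
  simpa [h] using X_dvd_sub_sub0 i p

/-- The purely arithmetic cross-multiplication step. -/
lemma field_step {α β : Type*} [DecidableEq α] [DecidableEq β]
    (s : Finset α) (x : α → ℝ) (hx : ∀ l ∈ s, x l ≠ 0)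
    (t : Finset β) (a b : β → ℝ) (hb : ∀ j ∈ t, b j ≠ 0)
    (h : (∑ l ∈ s, 1 / x l) = ∑ j ∈ t, a j / b j) :
    (∑ l ∈ s, ∏ l' ∈ s.erase l, x l') * ∏ j ∈ t, b j
      = (∏ l ∈ s, x l) * ∑ j ∈ t, a j * ∏ j' ∈ t.erase j, b j' := by
  have h1 : ∑ l ∈ s, ∏ l' ∈ s.erase l, x l' = (∑ l ∈ s, 1 / x l) * ∏ l ∈ s, x l := by
    rw [Finset.sum_mul]
    refine Finset.sum_congr rfl fun l hl => ?_
    rw [← Finset.mul_prod_erase s x hl, one_div, inv_mul_cancel_left₀ (hx l hl)]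
  have h2 : ∑ j ∈ t, a j * ∏ j' ∈ t.erase j, b j'
      = (∑ j ∈ t, a j / b j) * ∏ j ∈ t, b j := by
    rw [Finset.sum_mul]
    refine Finset.sum_congr rfl fun j hj => ?_
    rw [← Finset.mul_prod_erase t b hj]
    have hbj := hb j hj
    field_simp
  rw [h1, h2, h]; ring

lemma claimA (T : Finset (Fin n)) (k : ℕ) (f g : Fin k → MvPolynomial (Fin n) ℝ)
    (hid : ∀ x : Fin n → ℝ, (∀ i ∉ T, x i = 0) →
      (∑ i ∈ T, 1 / x i) = ∑ j, eval x (f j) / eval x (g j))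
    (i : Fin n) (hi : i ∈ T) :
    ∃ j, (X i : MvPolynomial (Fin n) ℝ) ∣ res T (g j) := by
  by_contra hc
  push_neg at hc
  set F : Fin k → MvPolynomial (Fin n) ℝ := fun j => res T (f j) with hF
  set G : Fin k → MvPolynomial (Fin n) ℝ := fun j => res T (g j) with hG
  set Pp : MvPolynomial (Fin n) ℝ := ∏ l ∈ T, X l with hPp
  set Ns : MvPolynomial (Fin n) ℝ := ∑ l ∈ T, ∏ l' ∈ T.erase l, X l' with hNs
  set Gp : MvPolynomial (Fin n) ℝ := ∏ j, G j with hGp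
  set M : MvPolynomial (Fin n) ℝ := ∑ j, F j * ∏ j' ∈ Finset.univ.erase j, G j' with hM
  have key : Ns * Gp = Pp * M := by
    have h0 : ∀ x : Fin n → ℝ, eval x ((Pp * Gp) * (Ns * Gp - Pp * M)) = eval x 0 := by
      intro x
      rw [map_zero, eval_mul]
      by_cases hx : eval x (Pp * Gp) = 0
      · rw [hx, zero_mul]
      · have hP : eval x Pp ≠ 0 := fun h => hx (by rw [eval_mul, h, zero_mul])
        have hGpx : eval x Gp ≠ 0 := fun h => hx (by rw [eval_mul, h, mul_zero])
        have ePp : eval x Pp = ∏ l ∈ T, x l := by simp [hPp]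
        have hxl : ∀ l ∈ T, x l ≠ 0 := fun l hl h0' =>
          hP (by rw [ePp]; exact Finset.prod_eq_zero hl h0')
        have eGp : eval x Gp = ∏ j, eval x (G j) := by simp [hGp]
        have hGx : ∀ j : Fin k, eval x (G j) ≠ 0 := fun j h0' =>
          hGpx (by rw [eGp]; exact Finset.prod_eq_zero (Finset.mem_univ j) h0')
        have h1 := hid (mask T x) (fun i' h => by simp [mask, h])
        have h1' : (∑ l ∈ T, 1 / x l) = ∑ j, eval x (F j) / eval x (G j) := by
          calc ∑ l ∈ T, 1 / x l = ∑ l ∈ T, 1 / mask T x l :=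
                Finset.sum_congr rfl (fun l hl => by simp [mask, hl])
            _ = ∑ j, eval (mask T x) (f j) / eval (mask T x) (g j) := h1
            _ = ∑ j, eval x (F j) / eval x (G j) := by
                refine Finset.sum_congr rfl fun j _ => ?_
                simp only [hF, hG, eval_res]
        have hfs := field_step T x hxl Finset.univ
          (fun j => eval x (F j)) (fun j => eval x (G j))
          (fun j _ => hGx j) h1'
        have eNs : eval x Ns = ∑ l ∈ T, ∏ l' ∈ T.erase l, x l' := by simp [hNs]
        have eM : eval x M = ∑ j, eval x (F j) * ∏ j' ∈ Finset.univ.erase j, eval x (G j') := by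
          simp [hM]
        have : eval x (Ns * Gp - Pp * M) = 0 := by
          rw [map_sub, eval_mul, eval_mul, eNs, eGp, ePp, eM, sub_eq_zero]
          exact hfs
        rw [this, mul_zero]
    have hz := MvPolynomial.funext h0
    have hPpne : Pp ≠ 0 := Finset.prod_ne_zero_iff.mpr fun l _ => X_ne_zero l
    have hGne : ∀ j, G j ≠ 0 := fun j h0' => hc j (by simp only [hG] at h0'; rw [h0']; exact dvd_zero _)
    have hGpne : Gp ≠ 0 := Finset.prod_ne_zero_iff.mpr fun j _ => hGne j
    have hne : Pp * Gp ≠ 0 := mul_ne_zero hPpne hGpne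
    rcases mul_eq_zero.mp hz with h | h
    · exact absurd h hne
    · exact sub_eq_zero.mp h
  -- now apply sub0 i to the key identity
  have hkey := congrArg (sub0 i) key
  rw [map_mul, map_mul] at hkey
  have sPp : sub0 i Pp = 0 := by
    rw [hPp, map_prod]
    exact Finset.prod_eq_zero hi (sub0_X_self i)
  have sNs : sub0 i Ns = ∏ l' ∈ T.erase i, X l' := by
    rw [hNs, map_sum]
    rw [Finset.sum_eq_single i]
    · rw [map_prod]
      refine Finset.prod_congr rfl fun l' hl' => ?_
      exact sub0_X_ne i l' (Finset.ne_of_mem_erase hl')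
    · intro l hl hne
      rw [map_prod]
      exact Finset.prod_eq_zero (Finset.mem_erase.mpr ⟨Ne.symm hne, hi⟩) (sub0_X_self i)
    · intro h; exact absurd hi h
  have sNsne : sub0 i Ns ≠ 0 := by
    rw [sNs]
    exact Finset.prod_ne_zero_iff.mpr fun l _ => X_ne_zero l
  have sGpne : sub0 i Gp ≠ 0 := by
    rw [hGp, map_prod]
    refine Finset.prod_ne_zero_iff.mpr fun j _ h0' => ?_
    exact hc j (X_dvd_of_sub0_eq_zero h0')
  rw [sPp, zero_mul] at hkey
  exact mul_ne_zero sNsne sGpne hkey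

lemma aux : ∀ (k : ℕ) (f g : Fin k → MvPolynomial (Fin n) ℝ) (T : Finset (Fin n)),
    k < T.card →
    ¬ ∀ x : Fin n → ℝ, (∀ i ∉ T, x i = 0) →
      (∑ i ∈ T, 1 / x i) = ∑ j, eval x (f j) / eval x (g j) := by
  intro k
  induction k with
  | zero =>
      intro f g T hT hid
      have h := hid (fun i => if i ∈ T then 1 else 0) (fun i h => by simp [h])
      simp only [Finset.univ_eq_empty, Finset.sum_empty] at h
      have e : ∀ i ∈ T, (1:ℝ) / (if i ∈ T then 1 else 0) = 1 := fun i hi => by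
        rw [if_pos hi, div_one]
      rw [Finset.sum_congr rfl e, Finset.sum_const, nsmul_eq_mul, mul_one] at h
      have : (0:ℝ) < T.card := by exact_mod_cast hT
      linarith
  | succ k ih =>
      intro f g T hT hid
      have hTne : T.Nonempty := Finset.card_pos.mp (by omega)
      obtain ⟨i, hi⟩ := hTne
      obtain ⟨j₀, hj₀⟩ := claimA T (k + 1) f g hid i hi
      refine ih (fun j => f (j₀.succAbove j)) (fun j => g (j₀.succAbove j)) (T.erase i)
        (by rw [Finset.card_erase_of_mem hi]; omega) ?_
      intro x hx
      have hx' : ∀ i' ∉ T, x i' = 0 := fun i' h =>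
        hx i' (fun c => h (Finset.mem_of_mem_erase c))
      have hxi : x i = 0 := hx i (Finset.notMem_erase i T)
      have h1 := hid x hx'
      have hmx : mask T x = x := by
        funext i'
        by_cases h : i' ∈ T <;> simp [mask, h, hx' _]
      have hg0 : eval x (g j₀) = 0 := by
        obtain ⟨q, hq⟩ := hj₀
        have : eval x (g j₀) = eval x (res T (g j₀)) := by rw [eval_res, hmx]
        rw [this, hq, eval_mul, eval_X, hxi, zero_mul]
      rw [← Finset.add_sum_erase T _ hi, hxi, Fin.sum_univ_succAbove _ j₀, hg0] at h1
      simpa using h1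

end SumRecip

theorem sum_of_reciprocals_needs_n_fractions (n : ℕ) (hn : 2 ≤ n) :
    ¬ ∃ f g : Fin (n - 1) → MvPolynomial (Fin n) ℤ,
      ∀ x : Fin n → ℝ,
        (∑ i : Fin n, 1 / x i) =
          ∑ j : Fin (n - 1),
            MvPolynomial.eval₂ (Int.castRingHom ℝ) x (f j) /
              MvPolynomial.eval₂ (Int.castRingHom ℝ) x (g j) := by
  rintro ⟨f, g, h⟩
  refine SumRecip.aux (n - 1)
    (fun j => MvPolynomial.map (Int.castRingHom ℝ) (f j))
    (fun j => MvPolynomial.map (Int.castRingHom ℝ) (g j))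
    Finset.univ (by simp; omega) ?_
  intro x _
  refine (h x).trans (Finset.sum_congr rfl fun j _ => ?_)
  rw [MvPolynomial.eval₂_eq_eval_map, MvPolynomial.eval₂_eq_eval_map]
end

section
/- The equational axioms of divisive meadows are not ω-complete. Concretely: (a) for every divisive meadow (R, d) and every element a of the minimal divisive submeadow of R (i.e., a belongs to every subring of R closed under d), one has (1 − d (2 : R) (2 : R)) * (a^2 − a) = 0, so every closed substitution instance of the equation (1 − 2/2)·(x² − x) = 0 holds in every divisive meadow; yet (b) the equation itself fails in some divisive meadow: in the field GF(4) (GaloisField 2 2 with its zero-totalized division, where 2 = 0 and hence 2/2 = 0) there exists an element x with (1 − (2 : GF(4))/(2 : GF(4))) * (x^2 − x) ≠ 0. -/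
theorem divisive_meadow_axioms_not_omega_complete :
    (∀ (R : Type) [CommRing R] (d : R → R → R),
        (∀ x : R, d 1 (d 1 x) = x) → (∀ x : R, d (x * x) x = x) →
        (∀ x y : R, d x y = x * d 1 y) →
        ∀ a : R,
          (∀ S : Subring R, (∀ x y : R, x ∈ S → y ∈ S → d x y ∈ S) → a ∈ S) →
          (1 - d 2 2) * (a ^ 2 - a) = 0) ∧
      (∃ x : GaloisField 2 2,
        (1 - (2 : GaloisField 2 2) / (2 : GaloisField 2 2)) * (x ^ 2 - x) ≠ 0) := by
  constructor
  · intro R _ d h1 h2 h3 a ha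
    set e : R := 1 - d 2 2 with he
    have hxx : ∀ x : R, x * x * d 1 x = x := by
      intro x
      have hx := h2 x
      rw [h3] at hx
      linear_combination hx
    have hii : ∀ y : R, d 1 y * d 1 y * y = d 1 y := by
      intro y
      have hx := hxx (d 1 y)
      rwa [h1] at hx
    have k2 : (2 : R) * 2 * d 1 2 = 2 := hxx 2
    have he' : e = 1 - 2 * d 1 2 := by rw [he, h3]
    have he2 : (2 : R) * e = 0 := by rw [he']; linear_combination -k2
    have hee : e * e = e := by rw [he']; linear_combination (d 1 2) * k2
    have hinv : ∀ y : R, (e * y = 0 ∨ e * y = e) → (e * d 1 y = 0 ∨ e * d 1 y = e) := by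
      intro y hy
      rcases hy with hy | hy
      · left
        linear_combination (-e) * hii y + d 1 y * d 1 y * hy
      · right
        linear_combination (1 - d 1 y - y * d 1 y) * hy + e * hxx y
    let S : Subring R :=
      { carrier := {x | e * x = 0 ∨ e * x = e}
        zero_mem' := Or.inl (by ring)
        one_mem' := Or.inr (by ring)
        add_mem' := by
          rintro x y (hx | hx) (hy | hy)
          · exact Or.inl (by linear_combination hx + hy)
          · exact Or.inr (by linear_combination hx + hy)
          · exact Or.inr (by linear_combination hx + hy)
          · exact Or.inl (by linear_combination hx + hy + he2)
        mul_mem' := by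
          rintro x y hx hy
          have key : e * (x * y) = (e * x) * (e * y) := by
            linear_combination (-(x * y)) * hee
          rcases hx with hx | hx <;> rcases hy with hy | hy
          · exact Or.inl (by rw [key, hx, hy]; ring)
          · exact Or.inl (by rw [key, hx, hy]; ring)
          · exact Or.inl (by rw [key, hx, hy]; ring)
          · exact Or.inr (by rw [key, hx, hy]; exact hee)
        neg_mem' := by
          rintro x (hx | hx)
          · exact Or.inl (by linear_combination -hx)
          · exact Or.inr (by linear_combination -hx - he2) }
    have hmem : ∀ x : R, x ∈ S ↔ (e * x = 0 ∨ e * x = e) := fun x => Iff.rfl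
    have hclosed : ∀ x y : R, x ∈ S → y ∈ S → d x y ∈ S := by
      intro x y hx hy
      rw [hmem] at hx hy ⊢
      have hiy := hinv y hy
      rw [h3 x y]
      have key : e * (x * d 1 y) = (e * x) * (e * d 1 y) := by
        linear_combination (-(x * d 1 y)) * hee
      rcases hx with hx | hx <;> rcases hiy with hiy | hiy
      · exact Or.inl (by rw [key, hx, hiy]; ring)
      · exact Or.inl (by rw [key, hx, hiy]; ring)
      · exact Or.inl (by rw [key, hx, hiy]; ring)
      · exact Or.inr (by rw [key, hx, hiy]; exact hee)
    have haS := ha S hclosed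
    rw [hmem] at haS
    rcases haS with h | h
    · linear_combination (a - 1) * h
    · linear_combination a * h
  · haveI : DecidableEq (GaloisField 2 2) := Classical.decEq _
    haveI : Fintype (GaloisField 2 2) := Fintype.ofFinite _
    by_contra hcon
    push_neg at hcon
    have h20 : (2 : GaloisField 2 2) = 0 := by
      have := CharP.cast_eq_zero (GaloisField 2 2) 2
      simpa using this
    have hx : ∀ x : GaloisField 2 2, x ^ 2 = x := by
      intro x
      have hc := hcon x
      rw [h20, div_zero, sub_zero, one_mul, sub_eq_zero] at hc
      exact hc
    have hcard : Fintype.card (GaloisField 2 2) = 4 := by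
      have := GaloisField.card 2 2 (by norm_num)
      simpa using this
    have hsub : (Finset.univ : Finset (GaloisField 2 2)) ⊆ {0, 1} := by
      intro x _
      have h01 : x = 0 ∨ x = 1 := by
        have hfac : x * (x - 1) = 0 := by linear_combination hx x
        rcases mul_eq_zero.1 hfac with h | h
        · exact Or.inl h
        · exact Or.inr (by linear_combination h)
      rcases h01 with h | h <;> simp [h]
    have hle : Fintype.card (GaloisField 2 2) ≤ 2 := by
      calc Fintype.card (GaloisField 2 2) = (Finset.univ : Finset (GaloisField 2 2)).card :=
            rfl
        _ ≤ ({0, 1} : Finset (GaloisField 2 2)).card := Finset.card_le_card hsub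
        _ ≤ 2 := Finset.card_insert_le _ _ |>.trans (by simp)
    omega
end
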